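/- arXiv:2106.03936 — 5 statements merged into one kernel-verified Lean document; each statement's English description precedes it below -/
import Mathlib

section
/- Let d ≥ 1, let Ω = [0,1]^d, let x_1, …, x_N be pairwise distinct points of Ω, and let ν_1, …, ν_N be strictly positive real numbers with ν_1 + ⋯ + ν_N = 1. Then there exists a vector ψ ∈ ℝ^N such that for every i, the Lebesgue volume of the Laguerre cell Lag_i^ψ equals ν_i. -/
open MeasureTheory

/-- The unit cube `[0,1]^d` in Euclidean space. -/
def unitCube (d : ℕ) : Set (EuclideanSpace ℝ (Fin d)) :=
  {p | ∀ k, p k ∈ Set.Icc (0 : ℝ) 1}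

/-- The Laguerre cell of index `i`, relative to a set `Ω`, for points `x` and weights `ψ`. -/
def lagCell {d N : ℕ} (Ω : Set (EuclideanSpace ℝ (Fin d)))
    (x : Fin N → EuclideanSpace ℝ (Fin d)) (ψ : Fin N → ℝ) (i : Fin N) :
    Set (EuclideanSpace ℝ (Fin d)) :=
  {p ∈ Ω | ∀ j, ‖p - x i‖ ^ 2 - ψ i ≤ ‖p - x j‖ ^ 2 - ψ j}

namespace SDOT

open Finset

set_option linter.unusedSectionVars false
set_option linter.unusedVariables false
set_option linter.unnecessarySeqFocus false

section
variable {d N : ℕ} [NeZero N]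
local notation "E" d => EuclideanSpace ℝ (Fin d)

noncomputable def g (x : Fin N → E d) (ψ : Fin N → ℝ) (p : E d) : ℝ :=
  Finset.univ.sup' Finset.univ_nonempty fun j => ψ j - ‖p - x j‖ ^ 2

lemma le_g (x : Fin N → E d) (ψ : Fin N → ℝ) (p : E d) (j : Fin N) :
    ψ j - ‖p - x j‖ ^ 2 ≤ g x ψ p :=
  Finset.le_sup' (fun j => ψ j - ‖p - x j‖ ^ 2) (Finset.mem_univ j)

lemma g_le (x : Fin N → E d) (ψ : Fin N → ℝ) (p : E d) {c : ℝ}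
    (h : ∀ j, ψ j - ‖p - x j‖ ^ 2 ≤ c) : g x ψ p ≤ c :=
  Finset.sup'_le _ _ fun j _ => h j

lemma continuous_g (x : Fin N → E d) (ψ : Fin N → ℝ) : Continuous (g x ψ) := by
  apply continuous_iff_continuousAt.2
  intro p
  exact ContinuousAt.finset_sup'_apply _ fun j _ =>
    ((continuous_const.sub ((continuous_id.sub continuous_const).norm.pow 2)).continuousAt)

lemma isCompact_unitCube : IsCompact (unitCube d) := by
  have h1 : IsClosed (unitCube d) := by
    have : unitCube d = ⋂ k, (fun p : E d => p k) ⁻¹' Set.Icc (0:ℝ) 1 := by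
      ext p; simp [unitCube, Set.mem_iInter]
    rw [this]
    exact isClosed_iInter fun k => isClosed_Icc.preimage (EuclideanSpace.proj k).continuous
  have h2 : Bornology.IsBounded (unitCube d) := by
    rw [Metric.isBounded_iff_subset_closedBall 0]
    refine ⟨Real.sqrt d, fun p hp => ?_⟩
    simp only [Metric.mem_closedBall, dist_zero_right]
    rw [EuclideanSpace.norm_eq]
    apply Real.sqrt_le_sqrt
    calc ∑ k, ‖p k‖ ^ 2 ≤ ∑ _k : Fin d, 1 := by
          apply Finset.sum_le_sum
          intro k _
          have := hp k
          have h0 := this.1; have h1 := this.2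
          rw [Real.norm_eq_abs, abs_of_nonneg h0]
          nlinarith
      _ = d := by simp
  exact Metric.isCompact_of_isClosed_isBounded h1 h2

lemma measurableSet_unitCube : MeasurableSet (unitCube d) :=
  isCompact_unitCube.isClosed.measurableSet

lemma volume_unitCube : volume (unitCube d) = 1 := by
  have h := (EuclideanSpace.volume_preserving_symm_measurableEquiv_toLp (Fin d)).measure_preimage
    (s := Set.univ.pi fun _ : Fin d => Set.Icc (0:ℝ) 1)
    (MeasurableSet.univ_pi fun _ => measurableSet_Icc).nullMeasurableSet
  have he : (MeasurableEquiv.toLp 2 (Fin d → ℝ)).symm ⁻¹'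
      (Set.univ.pi fun _ : Fin d => Set.Icc (0:ℝ) 1) = unitCube d := by
    ext p
    simp only [unitCube, Set.mem_preimage, Set.mem_pi,
      Set.mem_univ, forall_true_left, Set.mem_Icc, Set.mem_setOf_eq]
    rfl
  rw [he] at h
  rw [h, volume_pi_pi]
  simp


lemma integrableOn_g (x : Fin N → E d) (ψ : Fin N → ℝ) :
    IntegrableOn (g x ψ) (unitCube d) :=
  (continuous_g x ψ).continuousOn.integrableOn_compact isCompact_unitCube

noncomputable def II (x : Fin N → E d) (ψ : Fin N → ℝ) : ℝ := ∫ p in unitCube d, g x ψ p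

noncomputable def Phi (x : Fin N → E d) (ν : Fin N → ℝ) (ψ : Fin N → ℝ) : ℝ :=
  (∑ i, ν i * ψ i) - II x ψ

lemma g_sub_g_le (x : Fin N → E d) (ψ φ : Fin N → ℝ) (p : E d) :
    g x ψ p - g x φ p ≤ dist ψ φ := by
  rw [sub_le_iff_le_add]
  apply g_le
  intro j
  have h1 : ψ j - φ j ≤ dist ψ φ := by
    calc ψ j - φ j ≤ |ψ j - φ j| := le_abs_self _
    _ = dist (ψ j) (φ j) := (Real.dist_eq _ _).symm
    _ ≤ dist ψ φ := dist_le_pi_dist ψ φ j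
  have h2 := le_g x φ p j
  linarith

lemma continuous_Phi (x : Fin N → E d) (ν : Fin N → ℝ) : Continuous (Phi x ν) := by
  have hI : LipschitzWith 1 (II x) := by
    apply LipschitzWith.of_dist_le_mul
    intro ψ φ
    rw [Real.dist_eq, NNReal.coe_one, one_mul, abs_sub_le_iff]
    constructor
    · have : II x ψ - II x φ = ∫ p in unitCube d, (g x ψ p - g x φ p) := by
        rw [integral_sub (integrableOn_g x ψ) (integrableOn_g x φ)]; rfl
      rw [this]
      calc ∫ p in unitCube d, (g x ψ p - g x φ p)
          ≤ ∫ _p in unitCube d, dist ψ φ := by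
            apply setIntegral_mono_on
              ((integrableOn_g x ψ).sub (integrableOn_g x φ))
              ((integrableOn_const_iff (by simp)).2 (Or.inr (by rw [volume_unitCube]; exact ENNReal.one_lt_top)))
              measurableSet_unitCube
            intro p _; exact g_sub_g_le x ψ φ p
        _ = dist ψ φ := by rw [setIntegral_const, measureReal_def, volume_unitCube]; simp
    · have : II x φ - II x ψ = ∫ p in unitCube d, (g x φ p - g x ψ p) := by
        rw [integral_sub (integrableOn_g x φ) (integrableOn_g x ψ)]; rfl
      rw [this]
      calc ∫ p in unitCube d, (g x φ p - g x ψ p)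
          ≤ ∫ _p in unitCube d, dist ψ φ := by
            apply setIntegral_mono_on
              ((integrableOn_g x φ).sub (integrableOn_g x ψ))
              ((integrableOn_const_iff (by simp)).2 (Or.inr (by rw [volume_unitCube]; exact ENNReal.one_lt_top)))
              measurableSet_unitCube
            intro p _
            have := g_sub_g_le x φ ψ p
            rwa [dist_comm φ ψ] at this
        _ = dist ψ φ := by rw [setIntegral_const, measureReal_def, volume_unitCube]; simp
  exact (continuous_finset_sum _ fun i _ => (continuous_const.mul (continuous_apply i))).sub
    (hI.continuous)

lemma g_add_const (x : Fin N → E d) (ψ : Fin N → ℝ) (c : ℝ) (p : E d) :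
    g x (fun i => ψ i + c) p = g x ψ p + c := by
  apply le_antisymm
  · apply g_le; intro j
    have := le_g x ψ p j; linarith
  · have h : g x ψ p ≤ g x (fun i => ψ i + c) p - c := by
      apply g_le; intro j
      have := le_g x (fun i => ψ i + c) p j
      linarith
    linarith

lemma II_add_const (x : Fin N → E d) (ψ : Fin N → ℝ) (c : ℝ) :
    II x (fun i => ψ i + c) = II x ψ + c := by
  unfold II
  have : ∀ p, g x (fun i => ψ i + c) p = g x ψ p + c := g_add_const x ψ c
  rw [show (fun p => g x (fun i => ψ i + c) p) = fun p => g x ψ p + c from funext this]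
  rw [integral_add (integrableOn_g x ψ)
    ((integrableOn_const_iff (by simp)).2 (Or.inr (by rw [volume_unitCube]; exact ENNReal.one_lt_top)))]
  rw [setIntegral_const, measureReal_def, volume_unitCube]
  simp

lemma Phi_add_const (x : Fin N → E d) (ν : Fin N → ℝ) (hsum : ∑ i, ν i = 1)
    (ψ : Fin N → ℝ) (c : ℝ) : Phi x ν (fun i => ψ i + c) = Phi x ν ψ := by
  unfold Phi
  rw [II_add_const]
  have h : ∑ i, ν i * (ψ i + c) = (∑ i, ν i * ψ i) + c := by
    have : ∀ i ∈ Finset.univ, ν i * (ψ i + c) = ν i * ψ i + ν i * c := fun i _ => by ring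
    rw [Finset.sum_congr rfl this, Finset.sum_add_distrib, ← Finset.sum_mul, hsum, one_mul]
  rw [h]; ring

lemma norm_sq_le_d {x p : E d} (hx : x ∈ unitCube d) (hp : p ∈ unitCube d) :
    ‖p - x‖ ^ 2 ≤ d := by
  have h : ‖p - x‖ = Real.sqrt (∑ k, ‖(p - x) k‖ ^ 2) := EuclideanSpace.norm_eq _
  rw [h, Real.sq_sqrt (Finset.sum_nonneg fun k _ => sq_nonneg _)]
  calc ∑ k, ‖(p - x) k‖ ^ 2 ≤ ∑ _k : Fin d, 1 := by
        apply Finset.sum_le_sum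
        intro k _
        have h1 := hp k; have h2 := hx k
        have : (p - x) k = p k - x k := rfl
        rw [this, Real.norm_eq_abs, sq_abs]
        simp only [Set.mem_Icc] at h1 h2
        nlinarith [h1.1, h1.2, h2.1, h2.2]
    _ = d := by simp

lemma integrableOn_term (x : Fin N → E d) (ψ : Fin N → ℝ) (j : Fin N) :
    IntegrableOn (fun p : E d => ψ j - ‖p - x j‖ ^ 2) (unitCube d) :=
  ((continuous_const.sub ((continuous_id.sub continuous_const).norm.pow 2)).continuousOn).integrableOn_compact isCompact_unitCube

lemma II_ge (x : Fin N → E d) (hxΩ : ∀ i, x i ∈ unitCube d) (ψ : Fin N → ℝ) (j : Fin N) :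
    ψ j - d ≤ II x ψ := by
  have h1 : ∫ p in unitCube d, (ψ j - ‖p - x j‖ ^ 2) ≤ II x ψ := by
    apply setIntegral_mono_on (integrableOn_term x ψ j) (integrableOn_g x ψ)
      measurableSet_unitCube
    intro p _; exact le_g x ψ p j
  have h2 : ψ j - d ≤ ∫ p in unitCube d, (ψ j - ‖p - x j‖ ^ 2) := by
    have : ∫ _p in unitCube d, (ψ j - d : ℝ) ≤ ∫ p in unitCube d, (ψ j - ‖p - x j‖ ^ 2) := by
      apply setIntegral_mono_on
        ((integrableOn_const_iff (by simp)).2 (Or.inr (by rw [volume_unitCube]; exact ENNReal.one_lt_top)))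
        (integrableOn_term x ψ j) measurableSet_unitCube
      intro p hp
      have := norm_sq_le_d (hxΩ j) hp
      linarith
    calc (ψ j - d : ℝ) = ∫ _p in unitCube d, (ψ j - d : ℝ) := by
          rw [setIntegral_const, measureReal_def, volume_unitCube]; simp
      _ ≤ _ := this
  linarith

lemma Phi_zero_nonneg (x : Fin N → E d) (ν : Fin N → ℝ) : 0 ≤ Phi x ν 0 := by
  unfold Phi
  simp only [Pi.zero_apply, mul_zero, Finset.sum_const_zero, zero_sub, neg_nonneg]
  unfold II
  apply integral_nonpos
  intro p
  apply g_le
  intro j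
  simp only [Pi.zero_apply]
  have : (0:ℝ) ≤ ‖p - x j‖ ^ 2 := sq_nonneg _
  linarith

lemma exists_global_max (x : Fin N → E d) (hxΩ : ∀ i, x i ∈ unitCube d)
    (ν : Fin N → ℝ) (hν : ∀ i, 0 < ν i) (hsum : ∑ i, ν i = 1) :
    ∃ ψ : Fin N → ℝ, ∀ φ : Fin N → ℝ, Phi x ν φ ≤ Phi x ν ψ := by
  obtain ⟨im, -, him⟩ := Finset.exists_mem_eq_inf' (Finset.univ_nonempty (α := Fin N)) ν
  set m : ℝ := ν im with hm
  have hm0 : 0 < m := hν im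
  set R : ℝ := d / m + 1 with hR
  have hR0 : 0 < R := by positivity
  set K : Set (Fin N → ℝ) := Set.univ.pi fun _ => Set.Icc 0 R with hK
  have hKc : IsCompact K := isCompact_univ_pi fun _ => isCompact_Icc
  have hK0 : (0 : Fin N → ℝ) ∈ K := by
    intro i _; exact ⟨le_refl 0, hR0.le⟩
  obtain ⟨ψ, hψK, hψmax⟩ := hKc.exists_isMaxOn ⟨0, hK0⟩ (continuous_Phi x ν).continuousOn
  refine ⟨ψ, fun φ => ?_⟩
  obtain ⟨i0, -, hi0⟩ := Finset.exists_mem_eq_inf' (Finset.univ_nonempty (α := Fin N)) φ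
  set φ' : Fin N → ℝ := fun i => φ i + (-(φ i0)) with hφ'
  have hPhi' : Phi x ν φ' = Phi x ν φ := Phi_add_const x ν hsum φ (-(φ i0))
  have hφ'0 : ∀ i, 0 ≤ φ' i := by
    intro i
    have : φ i0 ≤ φ i := hi0 ▸ Finset.inf'_le φ (Finset.mem_univ i)
    simp only [hφ']; linarith
  have hφ'i0 : φ' i0 = 0 := by simp [hφ']
  obtain ⟨i1, -, hi1⟩ := Finset.exists_mem_eq_sup' (Finset.univ_nonempty (α := Fin N)) φ'
  set M : ℝ := φ' i1 with hM
  have hφ'le : ∀ i, φ' i ≤ M := fun i => hi1 ▸ Finset.le_sup' φ' (Finset.mem_univ i)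
  have hM0 : 0 ≤ M := le_trans (hφ'0 i0) (hφ'le i0)
  rcases le_or_gt M R with hMR | hMR
  · have : φ' ∈ K := fun i _ => ⟨hφ'0 i, le_trans (hφ'le i) hMR⟩
    calc Phi x ν φ = Phi x ν φ' := hPhi'.symm
      _ ≤ Phi x ν ψ := hψmax this
  · have key : Phi x ν φ' < 0 := by
      have h1 : II x φ' ≥ M - d := by have := II_ge x hxΩ φ' i1; linarith
      have h2 : ∑ i, ν i * φ' i ≤ (1 - m) * M := by
        have e1 : ∑ i, ν i * φ' i = ν i0 * φ' i0 + ∑ i ∈ Finset.univ.erase i0, ν i * φ' i :=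
          (Finset.add_sum_erase _ _ (Finset.mem_univ i0)).symm
        have e2 : ∑ i ∈ Finset.univ.erase i0, ν i * φ' i ≤ ∑ i ∈ Finset.univ.erase i0, ν i * M := by
          apply Finset.sum_le_sum
          intro i _
          exact mul_le_mul_of_nonneg_left (hφ'le i) (hν i).le
        have e3 : ∑ i ∈ Finset.univ.erase i0, ν i = 1 - ν i0 := by
          have := Finset.add_sum_erase Finset.univ ν (Finset.mem_univ i0)
          linarith [hsum]
        have e4 : m ≤ ν i0 := le_trans him.ge (Finset.inf'_le ν (Finset.mem_univ i0))
        calc ∑ i, ν i * φ' i = ν i0 * φ' i0 + ∑ i ∈ Finset.univ.erase i0, ν i * φ' i := e1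
          _ = ∑ i ∈ Finset.univ.erase i0, ν i * φ' i := by rw [hφ'i0]; ring
          _ ≤ ∑ i ∈ Finset.univ.erase i0, ν i * M := e2
          _ = (1 - ν i0) * M := by rw [← Finset.sum_mul, e3]
          _ ≤ (1 - m) * M := by nlinarith
      have h3 : Phi x ν φ' ≤ (1 - m) * M - (M - d) := by
        have : Phi x ν φ' = (∑ i, ν i * φ' i) - II x φ' := rfl
        linarith
      have h4 : (1 - m) * M - (M - d) = d - m * M := by ring
      have h5 : m * R = d + m := by rw [hR]; field_simp
      nlinarith
    have := Phi_zero_nonneg x ν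
    have h0 : Phi x ν 0 ≤ Phi x ν ψ := hψmax hK0
    calc Phi x ν φ = Phi x ν φ' := hPhi'.symm
      _ ≤ Phi x ν ψ := by linarith

-- the superlevel set with slack t
def St (x : Fin N → E d) (ψ : Fin N → ℝ) (i : Fin N) (t : ℝ) : Set (E d) :=
  unitCube d ∩ {p | g x ψ p ≤ ψ i - ‖p - x i‖ ^ 2 + t}

def Ut (x : Fin N → E d) (ψ : Fin N → ℝ) (i : Fin N) (t : ℝ) : Set (E d) :=
  unitCube d ∩ {p | ∀ j, j ≠ i → ψ j - ‖p - x j‖ ^ 2 ≤ ψ i - ‖p - x i‖ ^ 2 - t}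

lemma continuous_term (x : Fin N → E d) (c : ℝ) (y : E d) :
    Continuous (fun p : E d => c - ‖p - y‖ ^ 2) :=
  continuous_const.sub ((continuous_id.sub continuous_const).norm.pow 2)

lemma measurableSet_St (x : Fin N → E d) (ψ : Fin N → ℝ) (i : Fin N) (t : ℝ) :
    MeasurableSet (St x ψ i t) := by
  apply measurableSet_unitCube.inter
  exact (isClosed_le (continuous_g x ψ)
    ((continuous_term x (ψ i) (x i)).add continuous_const)).measurableSet

lemma measurableSet_Ut (x : Fin N → E d) (ψ : Fin N → ℝ) (i : Fin N) (t : ℝ) :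
    MeasurableSet (Ut x ψ i t) := by
  apply measurableSet_unitCube.inter
  have : {p : E d | ∀ j, j ≠ i → ψ j - ‖p - x j‖ ^ 2 ≤ ψ i - ‖p - x i‖ ^ 2 - t}
      = ⋂ j, ⋂ (_ : j ≠ i), {p | ψ j - ‖p - x j‖ ^ 2 ≤ ψ i - ‖p - x i‖ ^ 2 - t} := by
    ext p; simp
  rw [this]
  refine MeasurableSet.iInter fun j => MeasurableSet.iInter fun hj => ?_
  exact (isClosed_le (continuous_term x (ψ j) (x j))
    ((continuous_term x (ψ i) (x i)).sub continuous_const)).measurableSet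

lemma volume_St_ge (x : Fin N → E d) (ν : Fin N → ℝ) (ψ : Fin N → ℝ)
    (hmax : ∀ φ, Phi x ν φ ≤ Phi x ν ψ) (i : Fin N) {t : ℝ} (ht : 0 < t) :
    ENNReal.ofReal (ν i) ≤ volume (St x ψ i t) := by
  classical
  set ψp := Function.update ψ i (ψ i + t) with hψp
  have hup : ∀ j, ψp j = if j = i then ψ i + t else ψ j := by
    intro j; by_cases h : j = i <;> simp [hψp, h, Function.update]
  have hle : ∀ j, ψ j ≤ ψp j := by
    intro j; rw [hup]; split <;> simp_all <;> linarith
  have hle' : ∀ j, ψp j ≤ ψ j + t := by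
    intro j; rw [hup]; split <;> simp_all <;> linarith
  -- pointwise facts about h := g ψp - g ψ
  have hnn : ∀ p, g x ψ p ≤ g x ψp p := by
    intro p; apply g_le; intro j
    exact le_trans (by have := hle j; linarith) (le_g x ψp p j)
  have hub : ∀ p, g x ψp p ≤ g x ψ p + t := by
    intro p; apply g_le; intro j
    have := le_g x ψ p j
    have := hle' j; linarith
  have hzero : ∀ p ∈ unitCube d \ St x ψ i t, g x ψp p = g x ψ p := by
    intro p hp
    obtain ⟨hpΩ, hpn⟩ := hp
    have hlt : ψ i - ‖p - x i‖ ^ 2 + t < g x ψ p := by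
      by_contra hcon
      push_neg at hcon
      exact hpn ⟨hpΩ, hcon⟩
    apply le_antisymm _ (hnn p)
    apply g_le; intro j
    rcases eq_or_ne j i with rfl | hj
    · rw [hup, if_pos rfl]; linarith
    · rw [hup, if_neg hj]; exact le_g x ψ p j
  -- sum difference
  have hsumdiff : (∑ j, ν j * ψp j) - (∑ j, ν j * ψ j) = ν i * t := by
    rw [← Finset.sum_sub_distrib]
    rw [Finset.sum_eq_single i]
    · rw [hup, if_pos rfl]; ring
    · intro j _ hj; rw [hup, if_neg hj]; ring
    · intro h; exact absurd (Finset.mem_univ i) h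
  -- from maximality
  have hPhi := hmax ψp
  have hII : ν i * t ≤ II x ψp - II x ψ := by
    have e1 : Phi x ν ψp = (∑ j, ν j * ψp j) - II x ψp := rfl
    have e2 : Phi x ν ψ = (∑ j, ν j * ψ j) - II x ψ := rfl
    rw [e1, e2] at hPhi
    linarith
  -- integral of difference
  have hint : II x ψp - II x ψ = ∫ p in unitCube d, (g x ψp p - g x ψ p) := by
    rw [integral_sub (integrableOn_g x ψp) (integrableOn_g x ψ)]; rfl
  -- split over St and complement
  set S := St x ψ i t with hS
  have hSsub : S ⊆ unitCube d := Set.inter_subset_left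
  have hsplit : (unitCube d : Set (E d)) = S ∪ (unitCube d \ S) := by
    rw [Set.union_diff_cancel hSsub]
  have hdisj : Disjoint S (unitCube d \ S) := Set.disjoint_sdiff_right.mono_left le_rfl
  have hint0 : IntegrableOn (fun p => g x ψp p - g x ψ p) (unitCube d) volume :=
    (integrableOn_g x ψp).sub (integrableOn_g x ψ)
  have hintS : IntegrableOn (fun p => g x ψp p - g x ψ p) S volume :=
    hint0.mono_set hSsub
  have hintSc : IntegrableOn (fun p => g x ψp p - g x ψ p) (unitCube d \ S) volume :=
    hint0.mono_set Set.diff_subset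
  have hsplit2 : ∫ p in unitCube d, (g x ψp p - g x ψ p)
      = (∫ p in S, (g x ψp p - g x ψ p)) + ∫ p in unitCube d \ S, (g x ψp p - g x ψ p) := by
    rw [← setIntegral_union hdisj (measurableSet_unitCube.diff (measurableSet_St x ψ i t))
      hintS hintSc]
    rw [← hsplit]
  have hzero2 : ∫ p in unitCube d \ S, (g x ψp p - g x ψ p) = 0 := by
    rw [setIntegral_congr_fun (measurableSet_unitCube.diff (measurableSet_St x ψ i t))
      (g := fun _ => (0:ℝ)) (fun p hp => by rw [hzero p hp]; ring)]
    simp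
  have hvolS : volume S ≤ 1 := by
    rw [← volume_unitCube (d := d)]; exact measure_mono hSsub
  have hvolSne : volume S ≠ ⊤ := by
    intro h; rw [h] at hvolS; exact absurd hvolS (by simp)
  have hboundS : ∫ p in S, (g x ψp p - g x ψ p) ≤ t * (volume S).toReal := by
    calc ∫ p in S, (g x ψp p - g x ψ p) ≤ ∫ _p in S, t := by
          apply setIntegral_mono_on hintS
            ((integrableOn_const_iff (by simp)).2 (Or.inr hvolSne.lt_top)) (measurableSet_St x ψ i t)
          intro p _
          have := hub p; linarith
      _ = (volume S).toReal * t := by rw [setIntegral_const, measureReal_def]; simp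
      _ = t * (volume S).toReal := by ring
  have hfinal : ν i * t ≤ t * (volume S).toReal := by
    rw [hint, hsplit2, hzero2] at hII
    linarith
  have hνle : ν i ≤ (volume S).toReal :=
    le_of_mul_le_mul_right (by linarith) ht
  exact (ENNReal.ofReal_le_iff_le_toReal hvolSne).2 hνle
lemma volume_Ut_le (x : Fin N → E d) (ν : Fin N → ℝ) (ψ : Fin N → ℝ)
    (hmax : ∀ φ, Phi x ν φ ≤ Phi x ν ψ) (i : Fin N) {t : ℝ} (ht : 0 < t) :
    volume (Ut x ψ i t) ≤ ENNReal.ofReal (ν i) := by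
  classical
  set ψm := Function.update ψ i (ψ i - t) with hψm
  have hup : ∀ j, ψm j = if j = i then ψ i - t else ψ j := by
    intro j; by_cases h : j = i <;> simp [hψm, h, Function.update]
  have hle : ∀ j, ψm j ≤ ψ j := by
    intro j; rw [hup]; split
    · simp_all; linarith
    · exact le_refl _
  -- pointwise: 0 ≤ g ψ - g ψm ≤ t, and = t on Ut
  have hnn : ∀ p, g x ψm p ≤ g x ψ p := by
    intro p; apply g_le; intro j
    exact le_trans (by have := hle j; have := le_g x ψ p j; linarith) (le_g x ψ p j)
  have heqU : ∀ p ∈ Ut x ψ i t, g x ψ p - g x ψm p = t := by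
    intro p hp
    obtain ⟨hpΩ, hpU⟩ := hp
    have hgψ : g x ψ p = ψ i - ‖p - x i‖ ^ 2 := by
      apply le_antisymm
      · apply g_le; intro j
        rcases eq_or_ne j i with rfl | hj
        · exact le_refl _
        · have := hpU j hj; linarith
      · exact le_g x ψ p i
    have hgψm : g x ψm p = ψ i - t - ‖p - x i‖ ^ 2 := by
      apply le_antisymm
      · apply g_le; intro j
        rcases eq_or_ne j i with rfl | hj
        · rw [hup, if_pos rfl]
        · rw [hup, if_neg hj]; have := hpU j hj; linarith
      · have := le_g x ψm p i
        rw [hup, if_pos rfl] at this; linarith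
    rw [hgψ, hgψm]; ring
  -- sum difference
  have hsumdiff : (∑ j, ν j * ψm j) - (∑ j, ν j * ψ j) = -(ν i * t) := by
    rw [← Finset.sum_sub_distrib]
    rw [Finset.sum_eq_single i]
    · rw [hup, if_pos rfl]; ring
    · intro j _ hj; rw [hup, if_neg hj]; ring
    · intro h; exact absurd (Finset.mem_univ i) h
  have hPhi := hmax ψm
  have hII : II x ψ - II x ψm ≤ ν i * t := by
    have e1 : Phi x ν ψm = (∑ j, ν j * ψm j) - II x ψm := rfl
    have e2 : Phi x ν ψ = (∑ j, ν j * ψ j) - II x ψ := rfl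
    rw [e1, e2] at hPhi
    linarith
  have hint : II x ψ - II x ψm = ∫ p in unitCube d, (g x ψ p - g x ψm p) := by
    rw [integral_sub (integrableOn_g x ψ) (integrableOn_g x ψm)]; rfl
  set U := Ut x ψ i t with hU
  have hUsub : U ⊆ unitCube d := Set.inter_subset_left
  have hint0 : IntegrableOn (fun p => g x ψ p - g x ψm p) (unitCube d) volume :=
    (integrableOn_g x ψ).sub (integrableOn_g x ψm)
  have hlow : t * (volume U).toReal ≤ ∫ p in unitCube d, (g x ψ p - g x ψm p) := by
    have h1 : ∫ p in U, (g x ψ p - g x ψm p) = t * (volume U).toReal := by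
      rw [setIntegral_congr_fun (measurableSet_Ut x ψ i t) (g := fun _ => t) heqU]
      rw [setIntegral_const, measureReal_def]; simp [mul_comm, hU]
    have h2 : ∫ p in U, (g x ψ p - g x ψm p) ≤ ∫ p in unitCube d, (g x ψ p - g x ψm p) := by
      apply setIntegral_mono_set hint0
      · filter_upwards with p using by have := hnn p; simp; linarith
      · exact HasSubset.Subset.eventuallyLE hUsub
    linarith
  have hvolU : volume U ≤ 1 := by
    rw [← volume_unitCube (d := d)]; exact measure_mono hUsub
  have hvolUne : volume U ≠ ⊤ := by
    intro h; rw [h] at hvolU; exact absurd hvolU (by simp)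
  have hfinal : (volume U).toReal ≤ ν i := by
    have : t * (volume U).toReal ≤ ν i * t := by
      rw [hint] at hII; linarith
    have := le_of_mul_le_mul_right (by linarith : (volume U).toReal * t ≤ ν i * t) ht
    linarith
  rw [← ENNReal.ofReal_toReal hvolUne]
  exact ENNReal.ofReal_le_ofReal hfinal

lemma hyperplane_null (v : E d) (hv : v ≠ 0) (c : ℝ) :
    volume {p : E d | inner ℝ v p = (c:ℝ)} = 0 := by
  set K : Submodule ℝ (E d) := LinearMap.ker (innerSL ℝ v : (E d) →ₗ[ℝ] ℝ) with hKdef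
  have hK : K ≠ ⊤ := by
    intro h
    have hvK : v ∈ K := h.symm ▸ Submodule.mem_top
    have : (inner ℝ v v : ℝ) = 0 := hvK
    exact hv ((inner_self_eq_zero (𝕜 := ℝ)).1 this)
  have hvn : ‖v‖ ≠ 0 := norm_ne_zero_iff.2 hv
  set p₀ : E d := (c / ‖v‖ ^ 2) • v with hp₀def
  have hp₀ : (inner ℝ v p₀ : ℝ) = c := by
    rw [hp₀def, real_inner_smul_right, real_inner_self_eq_norm_sq]
    field_simp
  have hset : {p : E d | inner ℝ v p = (c:ℝ)} = (fun p : E d => p + (-p₀)) ⁻¹' (K : Set (E d)) := by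
    ext p
    simp only [Set.mem_setOf_eq, Set.mem_preimage, SetLike.mem_coe, hKdef, LinearMap.mem_ker,
      ContinuousLinearMap.coe_coe, innerSL_apply_apply, inner_add_right, inner_neg_right, hp₀]
    constructor
    · intro h; rw [h]; ring
    · intro h; linarith
  rw [hset, measure_preimage_add_right]
  exact Measure.addHaar_submodule volume K hK

lemma bisector_null (x : Fin N → E d) (hx : Function.Injective x) (ψ : Fin N → ℝ)
    (i j : Fin N) (hj : j ≠ i) :
    volume {p : E d | ψ j - ‖p - x j‖ ^ 2 = ψ i - ‖p - x i‖ ^ 2} = 0 := by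
  have hv : x j - x i ≠ 0 := sub_ne_zero.2 fun h => hj (hx h)
  have : {p : E d | ψ j - ‖p - x j‖ ^ 2 = ψ i - ‖p - x i‖ ^ 2}
      = {p : E d | inner ℝ (x j - x i) p = ((ψ i - ψ j + ‖x j‖ ^ 2 - ‖x i‖ ^ 2) / 2 : ℝ)} := by
    ext p
    simp only [Set.mem_setOf_eq]
    rw [norm_sub_sq_real, norm_sub_sq_real, inner_sub_left]
    rw [real_inner_comm (x j) p, real_inner_comm (x i) p]
    constructor
    · intro h; linear_combination h / 2
    · intro h; linear_combination 2 * h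
  rw [this]
  exact hyperplane_null _ hv _

lemma mem_lagCell_iff (x : Fin N → E d) (ψ : Fin N → ℝ) (i : Fin N) (p : E d) :
    p ∈ lagCell (unitCube d) x ψ i ↔ p ∈ unitCube d ∧ g x ψ p ≤ ψ i - ‖p - x i‖ ^ 2 := by
  constructor
  · rintro ⟨hΩ, h⟩
    exact ⟨hΩ, g_le x ψ p fun j => by have := h j; linarith⟩
  · rintro ⟨hΩ, h⟩
    exact ⟨hΩ, fun j => by have := le_g x ψ p j; linarith⟩

lemma lagCell_eq_iInter (x : Fin N → E d) (ψ : Fin N → ℝ) (i : Fin N) :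
    lagCell (unitCube d) x ψ i = ⋂ n : ℕ, St x ψ i (1 / (n + 1)) := by
  ext p
  rw [mem_lagCell_iff, Set.mem_iInter]
  constructor
  · rintro ⟨hΩ, h⟩ n
    refine ⟨hΩ, ?_⟩
    have : (0:ℝ) < 1 / (n + 1) := by positivity
    simp only [Set.mem_setOf_eq]; linarith
  · intro h
    refine ⟨(h 0).1, ?_⟩
    have key : ∀ ε > (0:ℝ), g x ψ p ≤ ψ i - ‖p - x i‖ ^ 2 + ε := by
      intro ε hε
      obtain ⟨n, hn⟩ := exists_nat_one_div_lt hε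
      have := (h n).2
      simp only [Set.mem_setOf_eq] at this
      linarith
    exact le_of_forall_pos_le_add key

lemma volume_lagCell_ge (x : Fin N → E d) (ν : Fin N → ℝ) (ψ : Fin N → ℝ)
    (hmax : ∀ φ, Phi x ν φ ≤ Phi x ν ψ) (i : Fin N) :
    ENNReal.ofReal (ν i) ≤ volume (lagCell (unitCube d) x ψ i) := by
  rw [lagCell_eq_iInter]
  have hanti : Antitone fun n : ℕ => St x ψ i (1 / (n + 1)) := by
    intro n m hnm p hp
    refine ⟨hp.1, ?_⟩
    have h2 := hp.2
    simp only [Set.mem_setOf_eq] at h2 ⊢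
    have : (1:ℝ) / (m + 1) ≤ 1 / (n + 1) := by
      apply one_div_le_one_div_of_le (by positivity)
      have : (n:ℝ) ≤ m := Nat.cast_le.2 hnm
      linarith
    linarith
  rw [hanti.measure_iInter (fun n => (measurableSet_St x ψ i _).nullMeasurableSet)
    ⟨0, ne_top_of_le_ne_top (by rw [volume_unitCube]; exact ENNReal.one_ne_top)
      (measure_mono Set.inter_subset_left)⟩]
  exact le_iInf fun n => volume_St_ge x ν ψ hmax i (by positivity)

lemma volume_lagCell_le (x : Fin N → E d) (hx : Function.Injective x)
    (ν : Fin N → ℝ) (ψ : Fin N → ℝ)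
    (hmax : ∀ φ, Phi x ν φ ≤ Phi x ν ψ) (i : Fin N) :
    volume (lagCell (unitCube d) x ψ i) ≤ ENNReal.ofReal (ν i) := by
  classical
  set W : Set (E d) := ⋃ n : ℕ, Ut x ψ i (1 / (n + 1)) with hW
  set Z : Set (E d) := ⋃ j : Fin N, ⋃ (_ : j ≠ i),
    {p : E d | ψ j - ‖p - x j‖ ^ 2 = ψ i - ‖p - x i‖ ^ 2} with hZ
  have hZ0 : volume Z = 0 := by
    rw [hZ]
    refine measure_iUnion_null fun j => measure_iUnion_null fun hj => ?_
    exact bisector_null x hx ψ i j hj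
  have hsub : lagCell (unitCube d) x ψ i ⊆ W ∪ Z := by
    intro p hp
    obtain ⟨hΩ, hle⟩ := hp
    by_cases hex : ∃ j, j ≠ i ∧ ψ j - ‖p - x j‖ ^ 2 = ψ i - ‖p - x i‖ ^ 2
    · right
      obtain ⟨j, hj, hje⟩ := hex
      exact Set.mem_iUnion.2 ⟨j, Set.mem_iUnion.2 ⟨hj, hje⟩⟩
    · left
      push_neg at hex
      rcases (Finset.univ.erase i).eq_empty_or_nonempty with hemp | hne
      · refine Set.mem_iUnion.2 ⟨0, hΩ, fun j hj => ?_⟩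
        exact absurd (Finset.mem_erase.2 ⟨hj, Finset.mem_univ j⟩) (by rw [hemp]; simp)
      · set ε := (Finset.univ.erase i).inf' hne
          (fun j => (ψ i - ‖p - x i‖ ^ 2) - (ψ j - ‖p - x j‖ ^ 2)) with hε
        have hεpos : 0 < ε := by
          rw [hε, Finset.lt_inf'_iff]
          intro j hjmem
          have hj : j ≠ i := (Finset.mem_erase.1 hjmem).1
          have h1 := hle j
          have h2 := hex j hj
          rcases lt_or_eq_of_le (by linarith : ψ j - ‖p - x j‖ ^ 2 ≤ ψ i - ‖p - x i‖ ^ 2)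
            with h | h
          · linarith
          · exact absurd h h2
        obtain ⟨n, hn⟩ := exists_nat_one_div_lt hεpos
        refine Set.mem_iUnion.2 ⟨n, hΩ, fun j hj => ?_⟩
        have : ε ≤ (ψ i - ‖p - x i‖ ^ 2) - (ψ j - ‖p - x j‖ ^ 2) := by
          rw [hε]
          exact Finset.inf'_le _ (Finset.mem_erase.2 ⟨hj, Finset.mem_univ j⟩)
        linarith
  have hWle : volume W ≤ ENNReal.ofReal (ν i) := by
    have hmono : Monotone fun n : ℕ => Ut x ψ i (1 / (n + 1)) := by
      intro n m hnm p hp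
      refine ⟨hp.1, fun j hj => ?_⟩
      have := hp.2 j hj
      have h1 : (1:ℝ) / (m + 1) ≤ 1 / (n + 1) := by
        apply one_div_le_one_div_of_le (by positivity)
        have : (n:ℝ) ≤ m := Nat.cast_le.2 hnm
        linarith
      linarith
    rw [hW, hmono.measure_iUnion]
    exact iSup_le fun n => volume_Ut_le x ν ψ hmax i (by positivity)
  calc volume (lagCell (unitCube d) x ψ i) ≤ volume (W ∪ Z) := measure_mono hsub
    _ ≤ volume W + volume Z := measure_union_le W Z
    _ = volume W := by rw [hZ0, add_zero]
    _ ≤ ENNReal.ofReal (ν i) := hWle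
end

end SDOT

/-- Existence of weights realizing prescribed cell volumes (semi-discrete optimal transport). -/
theorem exists_weights_with_prescribed_volumes
    (d N : ℕ) (hd : 1 ≤ d) (hN : 1 ≤ N)
    (x : Fin N → EuclideanSpace ℝ (Fin d))
    (hxΩ : ∀ i, x i ∈ unitCube d)
    (hx : Function.Injective x)
    (ν : Fin N → ℝ) (hν : ∀ i, 0 < ν i) (hsum : ∑ i, ν i = 1) :
    ∃ ψ : Fin N → ℝ, ∀ i,
      volume (lagCell (unitCube d) x ψ i) = ENNReal.ofReal (ν i) := by
  have : NeZero N := ⟨by omega⟩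
  obtain ⟨ψ, hmax⟩ := SDOT.exists_global_max x hxΩ ν hν hsum
  exact ⟨ψ, fun i => le_antisymm (SDOT.volume_lagCell_le x hx ν ψ hmax i)
    (SDOT.volume_lagCell_ge x ν ψ hmax i)⟩
end

section
/- Let d ≥ 1, let Ω = [0,1]^d, let x_1, …, x_N be pairwise distinct points of Ω, and let ν_1, …, ν_N be strictly positive real numbers with ν_1 + ⋯ + ν_N = 1. If ψ and ψ′ are two vectors in ℝ^N such that the Lebesgue volume of Lag_i^ψ and of Lag_i^{ψ′} both equal ν_i for every i, then there is a constant c ∈ ℝ with ψ′_i = ψ_i + c for all i. -/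
open MeasureTheory

/- ### Auxiliary lemmas -/

lemma inner_hyperplane_vol_zero {d : ℕ} {v : EuclideanSpace ℝ (Fin d)} (hv : v ≠ 0) (a : ℝ) :
    volume {p : EuclideanSpace ℝ (Fin d) | (inner ℝ p v : ℝ) = a} = 0 := by
  set K : Submodule ℝ (EuclideanSpace ℝ (Fin d)) := LinearMap.ker (innerSL ℝ v).toLinearMap with hK
  have hKne : K ≠ ⊤ := by
    intro htop
    have hvK : v ∈ K := htop ▸ Submodule.mem_top
    have : (inner ℝ v v : ℝ) = 0 := hvK
    exact hv (inner_self_eq_zero.mp this)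
  set p₀ : EuclideanSpace ℝ (Fin d) := (a / ‖v‖ ^ 2) • v with hp₀
  have hinner : (inner ℝ v p₀ : ℝ) = a := by
    rw [hp₀, real_inner_smul_right, real_inner_self_eq_norm_sq]
    field_simp [norm_eq_zero.ne.mpr hv]
  have hset : {p : EuclideanSpace ℝ (Fin d) | (inner ℝ p v : ℝ) = a}
      = (fun x => -p₀ + x) ⁻¹' (K : Set (EuclideanSpace ℝ (Fin d))) := by
    ext p
    simp only [Set.mem_setOf_eq, Set.mem_preimage, SetLike.mem_coe, hK, LinearMap.mem_ker,
      ContinuousLinearMap.coe_coe, innerSL_apply_apply, inner_add_right, inner_neg_right, hinner]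
    rw [real_inner_comm]
    constructor <;> intro hh <;> linarith
  rw [hset, measure_preimage_add]
  exact Measure.addHaar_submodule volume K hKne

lemma pair_hyperplane_vol_zero {d : ℕ} {a b : EuclideanSpace ℝ (Fin d)} (hab : a ≠ b) (t : ℝ) :
    volume {p : EuclideanSpace ℝ (Fin d) | ‖p - a‖ ^ 2 - ‖p - b‖ ^ 2 = t} = 0 := by
  have hv : b - a ≠ 0 := sub_ne_zero.mpr (Ne.symm hab)
  have hset : {p : EuclideanSpace ℝ (Fin d) | ‖p - a‖ ^ 2 - ‖p - b‖ ^ 2 = t}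
      = {p : EuclideanSpace ℝ (Fin d) | (inner ℝ p (b - a) : ℝ) = (t - ‖a‖ ^ 2 + ‖b‖ ^ 2) / 2} := by
    ext p
    simp only [Set.mem_setOf_eq]
    rw [inner_sub_right]
    have ha := @norm_sub_sq_real (EuclideanSpace ℝ (Fin d)) _ _ p a
    have hb := @norm_sub_sq_real (EuclideanSpace ℝ (Fin d)) _ _ p b
    constructor <;> intro hh <;> linarith
  rw [hset]
  exact inner_hyperplane_vol_zero hv _

lemma convex_unitCube (d : ℕ) : Convex ℝ (unitCube d) := by
  intro p hp q hq s t hs ht hst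
  intro k
  have h1 := (hp k).1; have h2 := (hp k).2
  have h3 := (hq k).1; have h4 := (hq k).2
  have : (s • p + t • q) k = s * p k + t * q k := by
    simp [PiLp.add_apply, PiLp.smul_apply, smul_eq_mul]
  rw [this]
  constructor
  · positivity
  · nlinarith

lemma abs_coord_le_norm {d : ℕ} (w : EuclideanSpace ℝ (Fin d)) (k : Fin d) : |w k| ≤ ‖w‖ := by
  rw [EuclideanSpace.norm_eq]
  have h1 : |w k| = Real.sqrt (‖w k‖ ^ 2) := by
    rw [Real.sqrt_sq_eq_abs]; simp
  rw [h1]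
  apply Real.sqrt_le_sqrt
  have : ‖w k‖ ^ 2 ≤ ∑ i, ‖w i‖ ^ 2 :=
    Finset.single_le_sum (f := fun i => ‖w i‖ ^ 2) (fun i _ => by positivity) (Finset.mem_univ k)
  simpa using this

noncomputable def midCube (d : ℕ) : EuclideanSpace ℝ (Fin d) :=
  (WithLp.equiv 2 (Fin d → ℝ)).symm (fun _ => 1/2)

lemma midCube_apply (d : ℕ) (k : Fin d) : midCube d k = 1/2 := rfl

lemma center_mem_interior (d : ℕ) : midCube d ∈ interior (unitCube d) := by
  have hsub : Metric.ball (midCube d) (1/2) ⊆ unitCube d := by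
    intro p hp
    rw [Metric.mem_ball, dist_eq_norm] at hp
    intro k
    have h1 : |(p - midCube d) k| ≤ ‖p - midCube d‖ := abs_coord_le_norm _ k
    have h2 := le_trans h1 hp.le
    have hco : (p - midCube d) k = p k - 1/2 := by
      rw [PiLp.sub_apply, midCube_apply]
    rw [hco] at h2
    have h3 := abs_le.mp h2
    constructor <;> linarith [h3.1, h3.2]
  have hmem : midCube d ∈ Metric.ball (midCube d) (1/2) := by
    rw [Metric.mem_ball, dist_self]; norm_num
  exact interior_maximal hsub Metric.isOpen_ball hmem

lemma ball_inter_cube_pos {d : ℕ} {p : EuclideanSpace ℝ (Fin d)} (hp : p ∈ unitCube d)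
    {r : ℝ} (hr : 0 < r) : 0 < volume (Metric.ball p r ∩ unitCube d) := by
  set q : EuclideanSpace ℝ (Fin d) := midCube d with hq
  set t : ℝ := min 1 (r / (2 * (‖q - p‖ + 1))) with htdef
  have hqp : (0:ℝ) ≤ ‖q - p‖ := norm_nonneg _
  have ht0 : 0 < t := by
    apply lt_min one_pos
    positivity
  have ht1 : t ≤ 1 := min_le_left _ _
  have hz : p + t • (q - p) ∈ interior (unitCube d) :=
    (convex_unitCube d).add_smul_sub_mem_interior hp (center_mem_interior d) ⟨ht0, ht1⟩
  set z := p + t • (q - p) with hzdef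
  have hzp : ‖z - p‖ < r := by
    have h1 : z - p = t • (q - p) := by rw [hzdef]; abel
    rw [h1, norm_smul, Real.norm_eq_abs, abs_of_pos ht0]
    have h2 : t ≤ r / (2 * (‖q - p‖ + 1)) := min_le_right _ _
    calc t * ‖q - p‖ ≤ r / (2 * (‖q - p‖ + 1)) * ‖q - p‖ := by
          apply mul_le_mul_of_nonneg_right h2 hqp
      _ < r := by
          rw [div_mul_eq_mul_div, div_lt_iff₀ (by positivity)]
          nlinarith
  have hopen : IsOpen (Metric.ball p r ∩ interior (unitCube d)) :=
    Metric.isOpen_ball.inter isOpen_interior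
  have hne : (Metric.ball p r ∩ interior (unitCube d)).Nonempty := by
    refine ⟨z, ?_, hz⟩
    rw [Metric.mem_ball, dist_eq_norm]; exact hzp
  have := hopen.measure_pos volume hne
  refine lt_of_lt_of_le this (measure_mono ?_)
  exact Set.inter_subset_inter_right _ interior_subset

lemma contF {d : ℕ} (q : EuclideanSpace ℝ (Fin d)) (c : ℝ) :
    Continuous fun p : EuclideanSpace ℝ (Fin d) => ‖p - q‖ ^ 2 - c :=
  (((continuous_id.sub continuous_const).norm).pow 2).sub continuous_const

lemma unitCube_closed (d : ℕ) : IsClosed (unitCube d) := by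
  have heq : unitCube d = ⋂ k, (fun p : EuclideanSpace ℝ (Fin d) =>
      EuclideanSpace.proj k p) ⁻¹' Set.Icc (0:ℝ) 1 := by
    ext p
    exact ⟨fun hp => Set.mem_iInter.mpr fun k => hp k, fun hp k => Set.mem_iInter.mp hp k⟩
  rw [heq]
  exact isClosed_iInter fun k => IsClosed.preimage (EuclideanSpace.proj k).continuous isClosed_Icc

lemma lagCell_closed {d N : ℕ} (x : Fin N → EuclideanSpace ℝ (Fin d)) (ψ : Fin N → ℝ)
    (i : Fin N) : IsClosed (lagCell (unitCube d) x ψ i) := by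
  have heq : lagCell (unitCube d) x ψ i
      = unitCube d ∩ ⋂ j, {p : EuclideanSpace ℝ (Fin d) |
          ‖p - x i‖ ^ 2 - ψ i ≤ ‖p - x j‖ ^ 2 - ψ j} := by
    ext p
    simp only [lagCell, Set.mem_setOf_eq, Set.mem_inter_iff, Set.mem_iInter, Set.mem_sep_iff]
  rw [heq]
  exact (unitCube_closed d).inter (isClosed_iInter fun j => isClosed_le (contF _ _) (contF _ _))

lemma lagCell_inter_null {d N : ℕ} {x : Fin N → EuclideanSpace ℝ (Fin d)}
    (hx : Function.Injective x) (ψ : Fin N → ℝ) {i j : Fin N} (hij : i ≠ j) :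
    volume (lagCell (unitCube d) x ψ i ∩ lagCell (unitCube d) x ψ j) = 0 := by
  apply measure_mono_null
    (t := {p : EuclideanSpace ℝ (Fin d) | ‖p - x i‖ ^ 2 - ‖p - x j‖ ^ 2 = ψ i - ψ j})
  · rintro p ⟨⟨-, h1⟩, -, h2⟩
    have ha := h1 j
    have hb := h2 i
    simp only [Set.mem_setOf_eq]
    linarith
  · exact pair_hyperplane_vol_zero (fun hxx => hij (hx hxx)) _

lemma vol_biUnion_lagCell {d N : ℕ} {x : Fin N → EuclideanSpace ℝ (Fin d)}
    (hx : Function.Injective x) (ψ : Fin N → ℝ) (S : Finset (Fin N)) :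
    volume (⋃ i ∈ S, lagCell (unitCube d) x ψ i)
    = ∑ i ∈ S, volume (lagCell (unitCube d) x ψ i) := by
  apply measure_biUnion_finset₀
  · intro i _ j _ hij
    exact lagCell_inter_null hx ψ hij
  · intro i _
    exact (lagCell_closed x ψ i).measurableSet.nullMeasurableSet

/-- Uniqueness, up to an additive constant, of weights realizing prescribed cell volumes. -/
theorem weights_unique_up_to_constant
    (d N : ℕ) (hd : 1 ≤ d) (hN : 1 ≤ N)
    (x : Fin N → EuclideanSpace ℝ (Fin d))
    (hxΩ : ∀ i, x i ∈ unitCube d)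
    (hx : Function.Injective x)
    (ν : Fin N → ℝ) (hν : ∀ i, 0 < ν i) (hsum : ∑ i, ν i = 1)
    (ψ ψ' : Fin N → ℝ)
    (h : ∀ i, volume (lagCell (unitCube d) x ψ i) = ENNReal.ofReal (ν i))
    (h' : ∀ i, volume (lagCell (unitCube d) x ψ' i) = ENNReal.ofReal (ν i)) :
    ∃ c : ℝ, ∀ i, ψ' i = ψ i + c := by
  classical
  haveI : Nonempty (Fin N) := Fin.pos_iff_nonempty.mp hN
  obtain ⟨i₀, -, hi₀⟩ :=
    Finset.exists_max_image Finset.univ (fun i => ψ' i - ψ i) Finset.univ_nonempty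
  set c := ψ' i₀ - ψ i₀ with hc
  refine ⟨c, fun iBad => ?_⟩
  by_contra hne0
  have hjBad : ψ' iBad - ψ iBad ≠ c := fun hcc => hne0 (by linarith)
  set S : Finset (Fin N) := Finset.univ.filter (fun j => ψ' j - ψ j = c) with hS
  set T : Finset (Fin N) := Finset.univ.filter (fun j => ψ' j - ψ j ≠ c) with hT
  have hSne : S.Nonempty := ⟨i₀, by simp [hS, hc]⟩
  have hTne : T.Nonempty := ⟨iBad, by simp [hT, hjBad]⟩
  obtain ⟨j₁, hj₁T, hj₁max⟩ := Finset.exists_max_image T (fun j => ψ' j - ψ j) hTne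
  set δ := c - (ψ' j₁ - ψ j₁) with hδ
  have hδpos : 0 < δ := by
    have h1 : ψ' j₁ - ψ j₁ ≤ c := hi₀ j₁ (Finset.mem_univ _)
    have h2 : ψ' j₁ - ψ j₁ ≠ c := (Finset.mem_filter.mp hj₁T).2
    rw [hδ]
    exact sub_pos.mpr (lt_of_le_of_ne h1 h2)
  -- the basic functions
  set f : Fin N → EuclideanSpace ℝ (Fin d) → ℝ := fun k p => ‖p - x k‖ ^ 2 - ψ k with hf
  set g : EuclideanSpace ℝ (Fin d) → ℝ := fun p => S.inf' hSne (fun k => f k p) with hg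
  set gc : EuclideanSpace ℝ (Fin d) → ℝ := fun p => T.inf' hTne (fun k => f k p) with hgc
  set F : EuclideanSpace ℝ (Fin d) → ℝ := fun p => g p - gc p with hF
  have hfcont : ∀ k, Continuous (f k) := fun k => contF _ _
  have hgcont : Continuous g := Continuous.finset_inf'_apply hSne fun k _ => hfcont k
  have hgccont : Continuous gc := Continuous.finset_inf'_apply hTne fun k _ => hfcont k
  have hFcont : Continuous F := hgcont.sub hgccont
  have hTle : ∀ k ∈ T, ψ' k - ψ k ≤ c - δ := by
    intro k hk
    have := hj₁max k hk
    rw [hδ]; linarith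
  -- (B) : points of Ω with F p ≤ δ lie in some ψ'-cell with index in S
  have hB : ∀ p ∈ unitCube d, F p ≤ δ → ∃ i ∈ S, p ∈ lagCell (unitCube d) x ψ' i := by
    intro p hp hFp
    obtain ⟨istar, histarS, histar⟩ := Finset.exists_mem_eq_inf' hSne (fun k => f k p)
    refine ⟨istar, histarS, hp, fun j => ?_⟩
    have histarc : ψ' istar - ψ istar = c := (Finset.mem_filter.mp histarS).2
    have hfeq : g p = f istar p := histar
    have hFp' : g p - gc p ≤ δ := hFp
    have hfst : f istar p = ‖p - x istar‖ ^ 2 - ψ istar := rfl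
    have hfj : f j p = ‖p - x j‖ ^ 2 - ψ j := rfl
    by_cases hjS : ψ' j - ψ j = c
    · have hjmem : j ∈ S := by simp [hS, hjS]
      have hle : g p ≤ f j p := Finset.inf'_le (fun k => f k p) hjmem
      linarith [hle, hfeq, hfst, hfj, histarc, hjS]
    · have hjT : j ∈ T := by simp [hT, hjS]
      have h1 : gc p ≤ f j p := Finset.inf'_le (fun k => f k p) hjT
      have h2 : ψ' j - ψ j ≤ c - δ := hTle j hjT
      linarith [hFp', h1, h2, hfeq, hfst, hfj, histarc]
  -- (C) : for i ∈ S, points in the ψ-cell of i have F p ≤ 0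
  have hC : ∀ i ∈ S, ∀ p ∈ lagCell (unitCube d) x ψ i, F p ≤ 0 := by
    intro i hiS p hp
    have h1 : g p ≤ f i p := Finset.inf'_le (fun k => f k p) hiS
    have h2 : f i p ≤ gc p := Finset.le_inf' hTne (fun k => f k p) (fun j _ => hp.2 j)
    have : F p = g p - gc p := rfl
    rw [this]; linarith
  -- (E) : the level set {F = 0} is null
  have hE : volume {p : EuclideanSpace ℝ (Fin d) | F p = 0} = 0 := by
    set A : Fin N × Fin N → Set (EuclideanSpace ℝ (Fin d)) := fun ij =>
      if ij.1 ∈ S ∧ ij.2 ∈ T then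
        {p : EuclideanSpace ℝ (Fin d) | ‖p - x ij.1‖ ^ 2 - ‖p - x ij.2‖ ^ 2 = ψ ij.1 - ψ ij.2}
      else ∅ with hA
    apply measure_mono_null (t := ⋃ ij : Fin N × Fin N, A ij)
    · intro p hp
      obtain ⟨i, hiS, hi⟩ := Finset.exists_mem_eq_inf' hSne (fun k => f k p)
      obtain ⟨j, hjT, hj⟩ := Finset.exists_mem_eq_inf' hTne (fun k => f k p)
      have hp0 : g p - gc p = 0 := hp
      have hgp : g p = f i p := hi
      have hgcp : gc p = f j p := hj
      refine Set.mem_iUnion.mpr ⟨(i, j), ?_⟩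
      rw [hA]
      simp only [hiS, hjT, and_self, if_true]
      have e1 : f i p = ‖p - x i‖ ^ 2 - ψ i := rfl
      have e2 : f j p = ‖p - x j‖ ^ 2 - ψ j := rfl
      simp only [Set.mem_setOf_eq]
      linarith [hp0, hgp, hgcp, e1, e2]
    · rw [measure_iUnion_null_iff]
      intro ij
      rw [hA]
      by_cases hcond : ij.1 ∈ S ∧ ij.2 ∈ T
      · simp only [hcond, if_true]
        have hij : ij.1 ≠ ij.2 := by
          intro heq
          have h1 := (Finset.mem_filter.mp hcond.1).2
          have h2 := (Finset.mem_filter.mp hcond.2).2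
          rw [heq] at h1
          exact h2 h1
        exact pair_hyperplane_vol_zero (fun hxx => hij (hx hxx)) _
      · simp only [hcond, if_false, measure_empty]
  -- M : the transition layer
  set M : Set (EuclideanSpace ℝ (Fin d)) :=
    {p | p ∈ unitCube d ∧ 0 < F p ∧ F p < δ} with hM
  have hMeq : M = unitCube d ∩ F ⁻¹' Set.Ioo 0 δ := by
    ext p
    simp only [hM, Set.mem_setOf_eq, Set.mem_inter_iff, Set.mem_preimage, Set.mem_Ioo]
  have hMmeas : MeasurableSet M := by
    rw [hMeq]
    exact (unitCube_closed d).measurableSet.inter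
      ((isOpen_Ioo.preimage hFcont).measurableSet)
  -- (F) : M has positive volume
  have hMpos : 0 < volume M := by
    by_contra hvol
    push_neg at hvol
    have hM0 : volume M = 0 := le_antisymm hvol zero_le
    -- the far region has positive volume
    set B : Set (EuclideanSpace ℝ (Fin d)) := {p | p ∈ unitCube d ∧ δ ≤ F p} with hBdef
    have hsub : lagCell (unitCube d) x ψ j₁ ⊆
        {p : EuclideanSpace ℝ (Fin d) | F p = 0} ∪ M ∪ B := by
      intro p hp
      have h0 : 0 ≤ F p := by
        have h1 : gc p ≤ f j₁ p := Finset.inf'_le (fun k => f k p) hj₁T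
        have h2 : f j₁ p ≤ g p := Finset.le_inf' hSne (fun k => f k p) (fun i _ => hp.2 i)
        have : F p = g p - gc p := rfl
        rw [this]; linarith
      rcases eq_or_lt_of_le h0 with h0' | h0'
      · exact Or.inl (Or.inl h0'.symm)
      · rcases lt_or_ge (F p) δ with hlt | hge
        · exact Or.inl (Or.inr ⟨hp.1, h0', hlt⟩)
        · exact Or.inr ⟨hp.1, hge⟩
    have hBpos : 0 < volume B := by
      have hchain : ENNReal.ofReal (ν j₁) ≤ volume B := by
        calc ENNReal.ofReal (ν j₁) = volume (lagCell (unitCube d) x ψ j₁) := (h j₁).symm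
          _ ≤ volume ({p : EuclideanSpace ℝ (Fin d) | F p = 0} ∪ M ∪ B) := measure_mono hsub
          _ ≤ volume ({p : EuclideanSpace ℝ (Fin d) | F p = 0} ∪ M) + volume B :=
              measure_union_le _ _
          _ ≤ volume {p : EuclideanSpace ℝ (Fin d) | F p = 0} + volume M + volume B := by
              gcongr
              exact measure_union_le _ _
          _ = volume B := by rw [hE, hM0, zero_add, zero_add]
      exact lt_of_lt_of_le (ENNReal.ofReal_pos.mpr (hν j₁)) hchain
    obtain ⟨b, hbΩ, hbF⟩ := nonempty_of_measure_ne_zero hBpos.ne'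
    have hapos : volume (lagCell (unitCube d) x ψ i₀) ≠ 0 := by
      rw [h i₀]
      exact (ENNReal.ofReal_pos.mpr (hν i₀)).ne'
    obtain ⟨a, ha⟩ := nonempty_of_measure_ne_zero hapos
    have haΩ : a ∈ unitCube d := ha.1
    have hi₀S : i₀ ∈ S := by simp [hS, hc]
    have haF : F a ≤ 0 := hC i₀ hi₀S a ha
    -- IVT along the segment from a to b
    have hγcont : Continuous fun t : ℝ => F (a + t • (b - a)) := by
      apply hFcont.comp
      exact continuous_const.add (continuous_id.smul continuous_const)
    have hIVT := intermediate_value_Icc (zero_le_one) hγcont.continuousOn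
    have hmem2 : δ/2 ∈ Set.Icc (F (a + (0:ℝ) • (b - a))) (F (a + (1:ℝ) • (b - a))) := by
      constructor
      · simp only [zero_smul, add_zero]
        exact le_trans haF (half_pos hδpos).le
      · simp only [one_smul]
        have hab : a + (b - a) = b := by abel
        rw [hab]
        exact le_trans (half_le_self hδpos.le) hbF
    obtain ⟨t, ht01, htp⟩ := hIVT hmem2
    set pstar := a + t • (b - a) with hpstar
    have hrep : pstar = (1 - t) • a + t • b := by
      rw [hpstar, smul_sub, sub_smul, one_smul]
      abel
    have hpΩ : pstar ∈ unitCube d := by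
      rw [hrep]
      exact convex_unitCube d haΩ hbΩ (a := 1 - t) (b := t)
        (by linarith [ht01.1, ht01.2]) ht01.1 (by ring)
    have hV : IsOpen (F ⁻¹' Set.Ioo 0 δ) := isOpen_Ioo.preimage hFcont
    have hpV : pstar ∈ F ⁻¹' Set.Ioo 0 δ := by
      simp only [Set.mem_preimage, Set.mem_Ioo, htp]
      constructor <;> linarith
    obtain ⟨r, hr0, hrsub⟩ := Metric.isOpen_iff.mp hV pstar hpV
    have hμ := ball_inter_cube_pos hpΩ hr0
    have hss : Metric.ball pstar r ∩ unitCube d ⊆ M := by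
      intro y hy
      have := hrsub hy.1
      exact ⟨hy.2, this.1, this.2⟩
    exact absurd (le_antisymm (hM0 ▸ measure_mono hss) zero_le) hμ.ne'
  -- the final counting argument
  set U : Set (EuclideanSpace ℝ (Fin d)) := ⋃ i ∈ S, lagCell (unitCube d) x ψ i with hU
  set U' : Set (EuclideanSpace ℝ (Fin d)) := ⋃ i ∈ S, lagCell (unitCube d) x ψ' i with hU'
  have hUsub : U ⊆ U' := by
    intro p hp
    rw [hU, Set.mem_iUnion₂] at hp
    obtain ⟨i, hiS, hcell⟩ := hp
    obtain ⟨i', hi', hcell'⟩ := hB p hcell.1 (le_trans (hC i hiS p hcell) hδpos.le)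
    exact Set.mem_biUnion hi' hcell'
  have hMsub : M ⊆ U' := by
    intro p hp
    obtain ⟨i', hi', hcell'⟩ := hB p hp.1 hp.2.2.le
    exact Set.mem_biUnion hi' hcell'
  have hdisj : Disjoint U M := by
    rw [Set.disjoint_left]
    intro p hpU hpM
    rw [hU, Set.mem_iUnion₂] at hpU
    obtain ⟨i, hiS, hcell⟩ := hpU
    exact absurd (hC i hiS p hcell) (not_le.mpr hpM.2.1)
  have hvolU : volume U = ∑ i ∈ S, ENNReal.ofReal (ν i) := by
    rw [hU, vol_biUnion_lagCell hx ψ S]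
    exact Finset.sum_congr rfl fun i _ => h i
  have hvolU' : volume U' = ∑ i ∈ S, ENNReal.ofReal (ν i) := by
    rw [hU', vol_biUnion_lagCell hx ψ' S]
    exact Finset.sum_congr rfl fun i _ => h' i
  have hle : volume U + volume M ≤ volume U' := by
    rw [← measure_union hdisj hMmeas]
    exact measure_mono (Set.union_subset hUsub hMsub)
  rw [hvolU, hvolU'] at hle
  have hfin : (∑ i ∈ S, ENNReal.ofReal (ν i)) ≠ ⊤ :=
    (ENNReal.sum_lt_top.mpr fun i _ => ENNReal.ofReal_lt_top).ne
  exact absurd hle (not_le.mpr (ENNReal.lt_add_right hfin hMpos.ne'))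
end

section
/- Let Ω ⊆ ℝ^d be a bounded measurable set, let x_1, …, x_N ∈ ℝ^d be pairwise distinct, let ν ∈ ℝ^N, and let K(ψ) = ∫_Ω min_i (‖x − x_i‖² − ψ_i) dx + Σ_i ψ_i ν_i. Then for every ψ ∈ ℝ^N and every index i, the function t ↦ K(ψ + t e_i) (where e_i is the i-th standard basis vector) is differentiable at t = 0 with derivative ν_i − |Lag_i^ψ|, the Lebesgue volume of the Laguerre cell of index i. -/
open MeasureTheory

/-- A hyperplane `{p | ⟪v, p⟫ = c}` with `v ≠ 0` has Lebesgue measure zero. -/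
lemma hyperplane_null {d : ℕ} (v : EuclideanSpace ℝ (Fin d)) (hv : v ≠ 0) (c : ℝ) :
    volume {p : EuclideanSpace ℝ (Fin d) | (inner ℝ v p : ℝ) = c} = 0 := by
  set W : Submodule ℝ (EuclideanSpace ℝ (Fin d)) := LinearMap.ker (innerSL ℝ v).toLinearMap with hW
  have hWtop : W ≠ ⊤ := by
    intro h
    have hvW : v ∈ W := h.symm ▸ Submodule.mem_top
    rw [hW, LinearMap.mem_ker] at hvW
    simp only [ContinuousLinearMap.coe_coe, innerSL_apply_apply, inner_self_eq_zero] at hvW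
    exact hv hvW
  set p₀ : EuclideanSpace ℝ (Fin d) := (c / ‖v‖ ^ 2) • v with hp₀def
  have hnv : ‖v‖ ^ 2 ≠ 0 := by simpa using hv
  have hp₀ : (inner ℝ v p₀ : ℝ) = c := by
    rw [hp₀def, real_inner_smul_right, real_inner_self_eq_norm_sq]
    field_simp
  have hset : {p : EuclideanSpace ℝ (Fin d) | (inner ℝ v p : ℝ) = c}
      = (fun p => p + (-p₀)) ⁻¹' (W : Set (EuclideanSpace ℝ (Fin d))) := by
    ext p
    simp only [Set.mem_setOf_eq, Set.mem_preimage, SetLike.mem_coe, hW, LinearMap.mem_ker,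
      ContinuousLinearMap.coe_coe, innerSL_apply_apply, inner_add_right, inner_neg_right, hp₀]
    rw [← sub_eq_add_neg, sub_eq_zero]
  rw [hset, measure_preimage_add_right]
  exact Measure.addHaar_submodule _ W hWtop

/-- Uniform Lipschitz bound for a finite inf of functions, each `1`-Lipschitz in `t`. -/
lemma lipschitz_inf' {N : ℕ} (H : (Finset.univ : Finset (Fin N)).Nonempty)
    (g : ℝ → Fin N → ℝ) (hg : ∀ s t j, |g s j - g t j| ≤ |s - t|) :
    LipschitzWith 1 (fun t => Finset.univ.inf' H (g t)) := by
  have key : ∀ s t : ℝ, Finset.univ.inf' H (g s) - Finset.univ.inf' H (g t) ≤ |s - t| := by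
    intro s t
    obtain ⟨j₀, -, hj₀⟩ := Finset.exists_mem_eq_inf' H (g t)
    have h1 : Finset.univ.inf' H (g s) ≤ g s j₀ := Finset.inf'_le _ (Finset.mem_univ j₀)
    have h3 : g s j₀ - g t j₀ ≤ |s - t| := (abs_le.1 (hg s t j₀)).2
    rw [hj₀]
    linarith
  rw [lipschitzWith_iff_dist_le_mul]
  intro s t
  rw [Real.dist_eq, Real.dist_eq, NNReal.coe_one, one_mul, abs_sub_le_iff]
  refine ⟨key s t, ?_⟩
  have := key t s
  rwa [abs_sub_comm] at this

/-- The Kantorovich dual functional `K` has partial derivative `νᵢ - |Lagᵢ^ψ|`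
in the direction of the `i`-th standard basis vector. -/
theorem kantorovich_dual_partial_deriv
    (d N : ℕ)
    (Ω : Set (EuclideanSpace ℝ (Fin d)))
    (hΩm : MeasurableSet Ω) (hΩb : Bornology.IsBounded Ω)
    (x : Fin N → EuclideanSpace ℝ (Fin d)) (hx : Function.Injective x)
    (ν : Fin N → ℝ) (ψ : Fin N → ℝ) (i : Fin N) :
    HasDerivAt (fun t : ℝ =>
        (∫ p in Ω, Finset.univ.inf' ⟨i, Finset.mem_univ i⟩
            (fun j => ‖p - x j‖ ^ 2 - (ψ j + t * (Pi.single i (1 : ℝ) : Fin N → ℝ) j))) +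
          ∑ j, (ψ j + t * (Pi.single i (1 : ℝ) : Fin N → ℝ) j) * ν j)
      (ν i - (volume (lagCell Ω x ψ i)).toReal) 0 := by
  classical
  have H : (Finset.univ : Finset (Fin N)).Nonempty := ⟨i, Finset.mem_univ i⟩
  set f : Fin N → EuclideanSpace ℝ (Fin d) → ℝ := fun j p => ‖p - x j‖ ^ 2 - ψ j with hfdef
  set F : ℝ → EuclideanSpace ℝ (Fin d) → ℝ := fun t p => Finset.univ.inf' H
      (fun j => ‖p - x j‖ ^ 2 - (ψ j + t * (Pi.single i (1 : ℝ) : Fin N → ℝ) j)) with hFdef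
  set S : Set (EuclideanSpace ℝ (Fin d)) := {p | ∀ j, f i p ≤ f j p} with hSdef
  set F' : EuclideanSpace ℝ (Fin d) → ℝ := S.indicator (fun _ => (-1 : ℝ)) with hF'def
  set μ : Measure (EuclideanSpace ℝ (Fin d)) := volume.restrict Ω with hμdef
  -- continuity of F t
  have hFcont : ∀ t : ℝ, Continuous (F t) := by
    intro t
    exact Continuous.finset_inf'_apply H fun j _ =>
      (((continuous_id.sub continuous_const).norm.pow 2).sub continuous_const)
  -- measurability of S
  have hSm : MeasurableSet S := by
    have : S = ⋂ j, {p : EuclideanSpace ℝ (Fin d) | f i p ≤ f j p} := by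
      ext p; simp [hSdef]
    rw [this]
    refine MeasurableSet.iInter fun j => ?_
    exact measurableSet_le
      (((continuous_id.sub continuous_const).norm.pow 2).sub continuous_const).measurable
      (((continuous_id.sub continuous_const).norm.pow 2).sub continuous_const).measurable
  -- Step A: differentiation under the integral
  have hA : HasDerivAt (fun t => ∫ p, F t p ∂μ) (∫ p, F' p ∂μ) 0 := by
    have hF_meas : ∀ᶠ t in nhds (0 : ℝ), AEStronglyMeasurable (F t) μ :=
      Filter.Eventually.of_forall fun t => (hFcont t).aestronglyMeasurable
    have hF_int : Integrable (F 0) μ := by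
      have h1 : IntegrableOn (F 0) (closure Ω) volume :=
        ContinuousOn.integrableOn_compact hΩb.isCompact_closure (hFcont 0).continuousOn
      exact h1.mono_set subset_closure
    have hF'_meas : AEStronglyMeasurable F' μ :=
      (measurable_const.indicator hSm).aestronglyMeasurable
    have h_lip : ∀ᵐ p ∂μ, LipschitzOnWith (Real.nnabs ((fun _ => (1 : ℝ)) p))
        (fun t => F t p) (Metric.ball (0 : ℝ) 1) := by
      refine Filter.Eventually.of_forall fun p => ?_
      have hone : Real.nnabs (1 : ℝ) = 1 := by simp
      rw [hone]
      have hlw : LipschitzWith 1 (fun t => F t p) := by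
        refine lipschitz_inf' H _ fun s t j => ?_
        rcases eq_or_ne j i with rfl | hj
        · simp only [Pi.single_eq_same, mul_one]
          have : ‖p - x j‖ ^ 2 - (ψ j + s) - (‖p - x j‖ ^ 2 - (ψ j + t)) = -(s - t) := by ring
          rw [this, abs_neg]
        · simp [Pi.single_apply, hj]
      exact hlw.lipschitzOnWith
    have h_bound_int : Integrable (fun _ : EuclideanSpace ℝ (Fin d) => (1 : ℝ)) μ := by
      rw [hμdef]
      exact integrableOn_const hΩb.measure_lt_top.ne
    have h_diff : ∀ᵐ p ∂μ, HasDerivAt (fun t => F t p) (F' p) 0 := by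
      have hae : ∀ᵐ p ∂(volume : Measure (EuclideanSpace ℝ (Fin d))),
          ∀ j, j ≠ i → f i p ≠ f j p := by
        rw [ae_all_iff]
        intro j
        rcases eq_or_ne j i with rfl | hj
        · exact Filter.Eventually.of_forall fun p h => absurd rfl h
        · have hxij : x j - x i ≠ 0 := sub_ne_zero.2 fun h => hj (hx h)
          have hv : (2 : ℝ) • (x j - x i) ≠ 0 := by simp [hxij]
          have hnull : volume {p : EuclideanSpace ℝ (Fin d) | f i p = f j p} = 0 := by
            have hset : {p : EuclideanSpace ℝ (Fin d) | f i p = f j p} =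
                {p : EuclideanSpace ℝ (Fin d) | (inner ℝ ((2 : ℝ) • (x j - x i)) p : ℝ)
                  = ‖x j‖ ^ 2 - ‖x i‖ ^ 2 - ψ j + ψ i} := by
              ext p
              simp only [Set.mem_setOf_eq, hfdef]
              rw [norm_sub_sq_real, norm_sub_sq_real, real_inner_smul_left, inner_sub_left]
              have h1 := real_inner_comm p (x i)
              have h2 := real_inner_comm p (x j)
              constructor <;> intro h <;> linarith
            rw [hset]
            exact hyperplane_null _ hv _
          have hne : ∀ᵐ p ∂(volume : Measure (EuclideanSpace ℝ (Fin d))), f i p ≠ f j p := by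
            rw [ae_iff]
            simp only [ne_eq, not_not]
            exact hnull
          exact hne.mono fun p h _ => h
      refine ae_restrict_of_ae (hae.mono fun p hp => ?_)
      by_cases hpS : p ∈ S
      · have hF'p : F' p = -1 := Set.indicator_of_mem hpS _
        rw [hF'p]
        have heq : (fun t => F t p) =ᶠ[nhds (0 : ℝ)] fun t => f i p - t := by
          have hall : ∀ᶠ t in nhds (0 : ℝ), ∀ j : Fin N,
              f i p - t ≤ ‖p - x j‖ ^ 2 - (ψ j + t * (Pi.single i (1 : ℝ) : Fin N → ℝ) j) := by
            rw [Filter.eventually_all]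
            intro j
            rcases eq_or_ne j i with rfl | hj
            · refine Filter.Eventually.of_forall fun t => ?_
              simp only [Pi.single_eq_same, mul_one, hfdef]
              ring_nf
              exact le_rfl
            · have hlt : f i p < f j p := lt_of_le_of_ne (hpS j) (hp j hj)
              have hneg : f i p - f j p < 0 := by linarith
              filter_upwards [eventually_gt_nhds hneg] with t ht
              simp only [Pi.single_apply, if_neg hj, mul_zero, add_zero]
              have hfj : ‖p - x j‖ ^ 2 - ψ j = f j p := rfl
              rw [hfj]
              linarith
          filter_upwards [hall] with t ht
          refine le_antisymm ?_ ?_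
          · refine Finset.inf'_le_of_le _ (Finset.mem_univ i) ?_
            simp only [Pi.single_eq_same, mul_one, hfdef]
            ring_nf
            exact le_rfl
          · exact Finset.le_inf' _ _ fun j _ => ht j
        have hbase : HasDerivAt (fun t : ℝ => f i p - t) (-1) 0 := by
          simpa using (hasDerivAt_id (0 : ℝ)).const_sub (f i p)
        exact hbase.congr_of_eventuallyEq heq
      · have hF'p : F' p = 0 := Set.indicator_of_notMem hpS _
        rw [hF'p]
        obtain ⟨k, hk⟩ : ∃ k, f k p < f i p := by
          by_contra hcon
          push_neg at hcon
          exact hpS fun j => hcon j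
        have hki : k ≠ i := fun h => absurd hk (by rw [h]; exact lt_irrefl _)
        have heq : (fun t => F t p) =ᶠ[nhds (0 : ℝ)] fun _ => F 0 p := by
          have hpos : (0 : ℝ) < f i p - f k p := by linarith
          filter_upwards [eventually_lt_nhds hpos] with t ht
          have termk : ∀ s : ℝ,
              ‖p - x k‖ ^ 2 - (ψ k + s * (Pi.single i (1 : ℝ) : Fin N → ℝ) k) = f k p := by
            intro s; simp [Pi.single_apply, hki, hfdef]
          show F t p = F 0 p
          rw [hFdef]
          refine le_antisymm ?_ ?_
          · refine Finset.le_inf' _ _ fun j _ => ?_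
            rcases eq_or_ne j i with rfl | hj
            · refine le_trans (Finset.inf'_le_of_le _ (Finset.mem_univ k) (le_of_eq (termk t))) ?_
              simp only [Pi.single_eq_same, zero_mul, add_zero]
              exact le_of_lt hk
            · refine Finset.inf'_le_of_le _ (Finset.mem_univ j) (le_of_eq ?_)
              simp [Pi.single_apply, hj]
          · refine Finset.le_inf' _ _ fun j _ => ?_
            rcases eq_or_ne j i with rfl | hj
            · refine le_trans (Finset.inf'_le_of_le _ (Finset.mem_univ k) (le_of_eq (termk 0))) ?_
              simp only [Pi.single_eq_same, mul_one]
              have h0 : ‖p - x j‖ ^ 2 - (ψ j + t) = f j p - t := by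
                simp only [hfdef]; ring
              rw [h0]
              linarith
            · refine Finset.inf'_le_of_le _ (Finset.mem_univ j) (le_of_eq ?_)
              simp [Pi.single_apply, hj]
        exact (hasDerivAt_const (0 : ℝ) (F 0 p)).congr_of_eventuallyEq heq
    exact (hasDerivAt_integral_of_dominated_loc_of_lip (Metric.ball_mem_nhds 0 one_pos) hF_meas hF_int hF'_meas
      h_lip h_bound_int h_diff).2
  -- Step B: the integral of F' is minus the volume of the Laguerre cell
  have hB : ∫ p, F' p ∂μ = -(volume (lagCell Ω x ψ i)).toReal := by
    rw [hF'def, integral_indicator_const _ hSm, hμdef, measureReal_restrict_apply hSm]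
    have hSΩ : S ∩ Ω = lagCell Ω x ψ i := by
      ext p
      simp only [Set.mem_inter_iff, hSdef, Set.mem_setOf_eq, lagCell, hfdef]
      tauto
    rw [hSΩ]
    simp [measureReal_def]
  -- Step C: derivative of the linear part
  have hC : HasDerivAt (fun t : ℝ =>
      ∑ j, (ψ j + t * (Pi.single i (1 : ℝ) : Fin N → ℝ) j) * ν j) (ν i) 0 := by
    have hrw : (fun t : ℝ => ∑ j, (ψ j + t * (Pi.single i (1 : ℝ) : Fin N → ℝ) j) * ν j)
        = fun t : ℝ => (∑ j, ψ j * ν j) + t * ν i := by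
      funext t
      simp only [add_mul, Finset.sum_add_distrib]
      congr 1
      simp only [Pi.single_apply, mul_ite, mul_one, mul_zero, ite_mul, zero_mul, mul_assoc]
      rw [Finset.sum_ite_eq' Finset.univ i (fun j => t * ν j)]
      simp
    rw [hrw]
    exact (hasDerivAt_mul_const (ν i)).const_add _
  have hcomb := hA.add hC
  rw [hB] at hcomb
  have hre : -(volume (lagCell Ω x ψ i)).toReal + ν i
      = ν i - (volume (lagCell Ω x ψ i)).toReal := by ring
  rw [hre] at hcomb
  exact hcomb
end

section
/- Let d ≥ 1, let Ω = [0,1]^d, let x_1, …, x_N ∈ Ω be pairwise distinct, and let ν_1, …, ν_N be strictly positive reals with Σ_i ν_i = 1. A vector ψ ∈ ℝ^N is a global maximizer of the Kantorovich dual functional K(ψ) = ∫_Ω min_i (‖x − x_i‖² − ψ_i) dx + Σ_i ψ_i ν_i if and only if the Lebesgue volume of the Laguerre cell Lag_i^ψ equals ν_i for every i. -/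
open MeasureTheory

namespace OTAux

open scoped RealInnerProductSpace

lemma continuous_finset_inf' {ι X : Type*} [TopologicalSpace X] {s : Finset ι} (hs : s.Nonempty)
    (f : ι → X → ℝ) (hf : ∀ i, Continuous (f i)) :
    Continuous fun p => s.inf' hs fun i => f i p := by
  induction hs using Finset.Nonempty.cons_induction with
  | singleton a => simpa using hf a
  | cons a s h hs ih =>
      have : (fun p => (Finset.cons a s h).inf' (Finset.cons_nonempty h) fun i => f i p)
          = fun p => (f a p) ⊓ (s.inf' hs fun i => f i p) := by
        funext p; exact Finset.inf'_cons hs (fun i => f i p)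
      rw [this]; exact (hf a).inf ih

lemma isClosed_unitCube (d : ℕ) : IsClosed (unitCube d) := by
  have : unitCube d = ⋂ k, (fun p : EuclideanSpace ℝ (Fin d) => p k) ⁻¹' Set.Icc (0:ℝ) 1 := by
    ext p; simp [unitCube, Set.mem_iInter]
  rw [this]
  exact isClosed_iInter fun k => IsClosed.preimage (EuclideanSpace.proj (𝕜 := ℝ) k).continuous isClosed_Icc

lemma isCompact_unitCube (d : ℕ) : IsCompact (unitCube d) := by
  refine Metric.isCompact_of_isClosed_isBounded (isClosed_unitCube d) ?_
  rw [isBounded_iff_forall_norm_le]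
  refine ⟨Real.sqrt d, fun p hp => ?_⟩
  rw [EuclideanSpace.norm_eq]
  refine Real.sqrt_le_sqrt ?_
  calc ∑ i, ‖p i‖ ^ 2 ≤ ∑ _i : Fin d, (1:ℝ) := by
        refine Finset.sum_le_sum fun i _ => ?_
        have h := hp i
        have : |p i| ≤ 1 := abs_le.2 ⟨by linarith [h.1], h.2⟩
        calc ‖p i‖^2 = |p i|^2 := by rw [Real.norm_eq_abs]
          _ ≤ 1^2 := by exact pow_le_pow_left₀ (abs_nonneg _) this 2
          _ = 1 := one_pow 2
    _ = d := by simp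

lemma measurableSet_unitCube (d : ℕ) : MeasurableSet (unitCube d) :=
  (isClosed_unitCube d).measurableSet

lemma volume_unitCube (d : ℕ) : volume (unitCube d) = 1 := by
  have h := (EuclideanSpace.volume_preserving_symm_measurableEquiv_toLp (ι := Fin d)).measure_preimage
    (s := Set.univ.pi fun _ : Fin d => Set.Icc (0:ℝ) 1)
    (MeasurableSet.univ_pi fun _ => measurableSet_Icc).nullMeasurableSet
  have heq : (MeasurableEquiv.toLp 2 (Fin d → ℝ)).symm ⁻¹' (Set.univ.pi fun _ => Set.Icc (0:ℝ) 1)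
      = unitCube d := by
    ext p
    exact ⟨fun hp k => hp k trivial, fun hp k _ => hp k⟩
  rw [heq] at h
  rw [h, volume_pi_pi]
  simp [Real.volume_Icc]

end OTAux

namespace OTAux

open scoped RealInnerProductSpace

lemma hyperplane_null (d : ℕ) (v : EuclideanSpace ℝ (Fin d)) (hv : v ≠ 0) (c : ℝ) :
    volume {p : EuclideanSpace ℝ (Fin d) | ⟪v, p⟫ = c} = 0 := by
  set K := LinearMap.ker ((innerSL ℝ v : EuclideanSpace ℝ (Fin d) →L[ℝ] ℝ) : EuclideanSpace ℝ (Fin d) →ₗ[ℝ] ℝ) with hK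
  have hKtop : K ≠ ⊤ := by
    intro h
    have : ⟪v, v⟫ = 0 := by
      have hvK : v ∈ K := h ▸ Submodule.mem_top
      simpa [hK, LinearMap.mem_ker] using hvK
    exact hv (inner_self_eq_zero.mp this)
  set p₀ : EuclideanSpace ℝ (Fin d) := (c / ‖v‖^2) • v with hp₀
  have hvnorm : ‖v‖^2 ≠ 0 := pow_ne_zero 2 (norm_ne_zero_iff.mpr hv)
  have hip : ⟪v, p₀⟫ = c := by
    rw [hp₀, real_inner_smul_right, real_inner_self_eq_norm_sq]
    field_simp
  have hset : {p : EuclideanSpace ℝ (Fin d) | ⟪v, p⟫ = c}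
      = (fun p => -p₀ + p) ⁻¹' (K : Set (EuclideanSpace ℝ (Fin d))) := by
    ext p
    simp only [Set.mem_setOf_eq, Set.mem_preimage, SetLike.mem_coe, hK, LinearMap.mem_ker]
    rw [show ((innerSL ℝ v : EuclideanSpace ℝ (Fin d) →L[ℝ] ℝ) : EuclideanSpace ℝ (Fin d) →ₗ[ℝ] ℝ) (-p₀ + p) = ⟪v, -p₀ + p⟫ from rfl, inner_add_right, inner_neg_right, hip]
    constructor <;> intro h <;> linarith
  rw [hset, measure_preimage_add]
  exact Measure.addHaar_submodule volume K hKtop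

lemma bisector_null {d : ℕ} (a b : EuclideanSpace ℝ (Fin d)) (hab : a ≠ b) (α β : ℝ) :
    volume {p : EuclideanSpace ℝ (Fin d) | ‖p - a‖^2 - α = ‖p - b‖^2 - β} = 0 := by
  have hv : (2:ℝ) • (b - a) ≠ 0 := by
    intro h
    apply hab
    have := smul_eq_zero.mp h
    rcases this with h | h
    · norm_num at h
    · exact (sub_eq_zero.mp h).symm
  have hset : {p : EuclideanSpace ℝ (Fin d) | ‖p - a‖^2 - α = ‖p - b‖^2 - β}
      = {p | ⟪(2:ℝ) • (b - a), p⟫ = ‖b‖^2 - ‖a‖^2 - β + α} := by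
    ext p
    have ha : ‖p - a‖^2 = ‖p‖^2 - 2 * ⟪p, a⟫ + ‖a‖^2 := norm_sub_sq_real p a
    have hb : ‖p - b‖^2 = ‖p‖^2 - 2 * ⟪p, b⟫ + ‖b‖^2 := norm_sub_sq_real p b
    have h2 : ⟪(2:ℝ) • (b - a), p⟫ = 2 * (⟪p, b⟫ - ⟪p, a⟫) := by
      rw [real_inner_smul_left, inner_sub_left, real_inner_comm b p, real_inner_comm a p]
    simp only [Set.mem_setOf_eq]
    constructor <;> intro h <;> nlinarith [ha, hb, h2]
  rw [hset]
  exact hyperplane_null d _ hv _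

end OTAux

/-- `ψ` globally maximizes the Kantorovich dual functional `K` if and only if
every Laguerre cell has exactly its prescribed volume. -/
theorem maximizer_iff_prescribed_volumes
    (d N : ℕ) (hd : 1 ≤ d) (hN : 1 ≤ N)
    (x : Fin N → EuclideanSpace ℝ (Fin d))
    (hxΩ : ∀ i, x i ∈ unitCube d) (hx : Function.Injective x)
    (ν : Fin N → ℝ) (hν : ∀ i, 0 < ν i) (hsum : ∑ i, ν i = 1)
    (ψ : Fin N → ℝ) :
    (∀ φ : Fin N → ℝ,
        (∫ p in unitCube d, Finset.univ.inf' ⟨⟨0, hN⟩, Finset.mem_univ _⟩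
            (fun j => ‖p - x j‖ ^ 2 - φ j)) + ∑ j, φ j * ν j ≤
          (∫ p in unitCube d, Finset.univ.inf' ⟨⟨0, hN⟩, Finset.mem_univ _⟩
            (fun j => ‖p - x j‖ ^ 2 - ψ j)) + ∑ j, ψ j * ν j) ↔
      (∀ i, volume (lagCell (unitCube d) x ψ i) = ENNReal.ofReal (ν i)) := by
  classical
  set Ω := unitCube d with hΩdef
  have hne : (Finset.univ : Finset (Fin N)).Nonempty := ⟨⟨0, hN⟩, Finset.mem_univ _⟩
  set m : (Fin N → ℝ) → EuclideanSpace ℝ (Fin d) → ℝ :=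
    fun φ p => Finset.univ.inf' hne fun j => ‖p - x j‖ ^ 2 - φ j with hmdef
  -- continuity of each coordinate function
  have hcontc : ∀ j : Fin N, Continuous fun p : EuclideanSpace ℝ (Fin d) => ‖p - x j‖ ^ 2 :=
    fun j => ((continuous_id.sub continuous_const).norm.pow 2)
  have hcont : ∀ φ, Continuous (m φ) := fun φ =>
    OTAux.continuous_finset_inf' hne _ (fun j => (hcontc j).sub continuous_const)
  have hΩmeas : MeasurableSet Ω := OTAux.measurableSet_unitCube d
  have hΩvol : volume Ω = 1 := OTAux.volume_unitCube d
  have hΩcompact : IsCompact Ω := OTAux.isCompact_unitCube d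
  have hint : ∀ φ, IntegrableOn (m φ) Ω :=
    fun φ => (hcont φ).continuousOn.integrableOn_compact hΩcompact
  have hmle : ∀ φ p (j : Fin N), m φ p ≤ ‖p - x j‖ ^ 2 - φ j :=
    fun φ p j => Finset.inf'_le _ (Finset.mem_univ j)
  have hmex : ∀ φ p, ∃ i, m φ p = ‖p - x i‖ ^ 2 - φ i := by
    intro φ p
    obtain ⟨i, -, hi⟩ := Finset.exists_mem_eq_inf' hne fun j => ‖p - x j‖ ^ 2 - φ j
    exact ⟨i, hi⟩
  have hmcell : ∀ (i : Fin N) p, p ∈ lagCell Ω x ψ i → m ψ p = ‖p - x i‖ ^ 2 - ψ i := by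
    intro i p hp
    exact le_antisymm (hmle ψ p i) (Finset.le_inf' hne _ fun j _ => hp.2 j)
  have hcellclosed : ∀ i, IsClosed (lagCell Ω x ψ i) := by
    intro i
    have : lagCell Ω x ψ i =
        Ω ∩ ⋂ j, {p | ‖p - x i‖ ^ 2 - ψ i ≤ ‖p - x j‖ ^ 2 - ψ j} := by
      ext p; simp [lagCell, Set.mem_iInter]
    rw [this]
    exact (OTAux.isClosed_unitCube d).inter (isClosed_iInter fun j =>
      isClosed_le ((hcontc i).sub continuous_const) ((hcontc j).sub continuous_const))
  have hcellmeas : ∀ i, MeasurableSet (lagCell Ω x ψ i) :=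
    fun i => (hcellclosed i).measurableSet
  have hcellvol_ne_top : ∀ i, volume (lagCell Ω x ψ i) ≠ ⊤ := by
    intro i
    refine ne_top_of_le_ne_top (by rw [hΩvol]; exact ENNReal.one_ne_top) (measure_mono ?_)
    exact fun p hp => hp.1
  -- the statement's K functional equals our m-based one definitionally
  constructor
  · intro hmax i
    have hsumupd : ∀ b : ℝ, ∑ j, (Function.update ψ i b) j * ν j
        = (∑ j, ψ j * ν j) + (b - ψ i) * ν i := by
      intro b
      have hterm : ∀ j : Fin N, (Function.update ψ i b) j * ν j
          = ψ j * ν j + (if j = i then (b - ψ i) * ν i else 0) := by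
        intro j
        rcases eq_or_ne j i with rfl | h
        · simp [Function.update_self]; ring
        · simp [Function.update_of_ne h, h]
      rw [Finset.sum_congr rfl fun j _ => hterm j, Finset.sum_add_distrib,
        Finset.sum_ite_eq' Finset.univ i]
      simp
    have hKey : ∀ b : ℝ,
        (∫ p in Ω, m (Function.update ψ i b) p) + (b - ψ i) * ν i ≤ ∫ p in Ω, m ψ p := by
      intro b
      have h' : (∫ p in Ω, m (Function.update ψ i b) p) + ∑ j, (Function.update ψ i b) j * ν j
          ≤ (∫ p in Ω, m ψ p) + ∑ j, ψ j * ν j := hmax (Function.update ψ i b)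
      rw [hsumupd b] at h'
      linarith
    -- the outer approximating sets
    set B : ℝ → Set (EuclideanSpace ℝ (Fin d)) := fun t =>
      {p ∈ Ω | ∀ j, ‖p - x i‖ ^ 2 - ψ i ≤ ‖p - x j‖ ^ 2 - ψ j + t} with hBdef
    have hBsub : ∀ t, B t ⊆ Ω := fun t p hp => hp.1
    have hBmeas : ∀ t, MeasurableSet (B t) := by
      intro t
      have : B t = Ω ∩ ⋂ j, {p | ‖p - x i‖ ^ 2 - ψ i ≤ ‖p - x j‖ ^ 2 - ψ j + t} := by
        ext p; simp [hBdef, Set.mem_iInter]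
      rw [this]
      refine (((OTAux.isClosed_unitCube d).inter (isClosed_iInter fun j => ?_))).measurableSet
      exact isClosed_le ((hcontc i).sub continuous_const)
        (((hcontc j).sub continuous_const).add continuous_const)
    have hBlower : ∀ t : ℝ, 0 < t → ENNReal.ofReal (ν i) ≤ volume (B t) := by
      intro t ht
      set φ := Function.update ψ i (ψ i + t) with hφdef
      have hpt : ∀ p ∈ Ω, m ψ p - m φ p ≤ Set.indicator (B t) (fun _ => t) p := by
        intro p hp
        by_cases hpB : p ∈ B t
        · rw [Set.indicator_of_mem hpB]
          have hle2 : m ψ p - t ≤ m φ p := by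
            refine Finset.le_inf' hne _ fun k _ => ?_
            rcases eq_or_ne k i with rfl | h
            · simp only [hφdef, Function.update_self]
              linarith [hmle ψ p k]
            · simp only [hφdef, Function.update_of_ne h]
              linarith [hmle ψ p k]
          linarith
        · rw [Set.indicator_of_notMem hpB]
          have hex2 : ∃ j, ‖p - x j‖ ^ 2 - ψ j + t < ‖p - x i‖ ^ 2 - ψ i := by
            by_contra hcon
            push_neg at hcon
            exact hpB ⟨hp, fun j => hcon j⟩
          obtain ⟨j₀, hj₀⟩ := hex2
          have hle2 : m ψ p ≤ m φ p := by
            refine Finset.le_inf' hne _ fun k _ => ?_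
            rcases eq_or_ne k i with rfl | h
            · simp only [hφdef, Function.update_self]
              linarith [hmle ψ p j₀]
            · simp only [hφdef, Function.update_of_ne h]
              exact hmle ψ p k
          linarith
      have hindint : IntegrableOn (Set.indicator (B t) fun _ => t) Ω := by
        refine Integrable.indicator ?_ (hBmeas t)
        exact (integrableOn_const_iff enorm_ne_top).mpr (Or.inr (by rw [hΩvol]; exact ENNReal.one_lt_top))
      have hineq : (∫ p in Ω, (m ψ p - m φ p)) ≤ ∫ p in Ω, Set.indicator (B t) (fun _ => t) p :=
        setIntegral_mono_on ((hint ψ).sub (hint φ)) hindint hΩmeas hpt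
      have hlhs : (∫ p in Ω, (m ψ p - m φ p)) = (∫ p in Ω, m ψ p) - ∫ p in Ω, m φ p :=
        integral_sub (hint ψ) (hint φ)
      have hrhs : (∫ p in Ω, Set.indicator (B t) (fun _ => t) p)
          = (volume (B t)).toReal * t := by
        rw [setIntegral_indicator (hBmeas t), setIntegral_const, smul_eq_mul]
        rw [Set.inter_eq_self_of_subset_right (hBsub t), measureReal_def]
      have hk := hKey (ψ i + t)
      rw [← hφdef, add_sub_cancel_left] at hk
      have hfin : ν i ≤ (volume (B t)).toReal := by
        refine le_of_mul_le_mul_right ?_ ht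
        linarith
      exact ENNReal.ofReal_le_of_le_toReal hfin
    have hInter : lagCell Ω x ψ i = ⋂ n : ℕ, B (1 / (n + 1)) := by
      ext p
      constructor
      · intro hp
        refine Set.mem_iInter.mpr fun n => ⟨hp.1, fun j => ?_⟩
        have hpos : (0 : ℝ) < 1 / (n + 1) := by positivity
        linarith [hp.2 j]
      · intro hp
        have h0 := Set.mem_iInter.mp hp 0
        refine ⟨h0.1, fun j => ?_⟩
        refine le_of_forall_pos_le_add fun ε hε => ?_
        obtain ⟨n, hn⟩ := exists_nat_one_div_lt hε
        have hmem := (Set.mem_iInter.mp hp n).2 j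
        linarith
    have hAnti : Antitone fun n : ℕ => B (1 / (n + 1)) := by
      intro a b hab p hp
      refine ⟨hp.1, fun j => ?_⟩
      have hmono : (1 : ℝ) / (b + 1) ≤ 1 / (a + 1) := by
        apply one_div_le_one_div_of_le
        · positivity
        · exact_mod_cast Nat.add_le_add_right hab 1
      linarith [hp.2 j]
    have htend := tendsto_measure_iInter_atTop (μ := volume) (s := fun n : ℕ => B (1 / (n + 1)))
        (fun n => (hBmeas _).nullMeasurableSet) hAnti
        ⟨0, ne_top_of_le_ne_top (hΩvol ▸ ENNReal.one_ne_top) (measure_mono (hBsub _))⟩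
    rw [← hInter] at htend
    have hlow : ENNReal.ofReal (ν i) ≤ volume (lagCell Ω x ψ i) :=
      ge_of_tendsto' htend fun n => hBlower _ (by positivity)
    -- the inner approximating sets
    set S : ℝ → Set (EuclideanSpace ℝ (Fin d)) := fun t =>
      {p ∈ Ω | ∀ j, j ≠ i → ‖p - x i‖ ^ 2 - ψ i + t ≤ ‖p - x j‖ ^ 2 - ψ j} with hSdef
    have hSsub : ∀ t, S t ⊆ Ω := fun t p hp => hp.1
    have hSmeas : ∀ t, MeasurableSet (S t) := by
      intro t
      have : S t = Ω ∩ ⋂ j, ⋂ (_ : j ≠ i),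
          {p | ‖p - x i‖ ^ 2 - ψ i + t ≤ ‖p - x j‖ ^ 2 - ψ j} := by
        ext p; simp [hSdef, Set.mem_iInter]
      rw [this]
      refine ((OTAux.isClosed_unitCube d).inter (isClosed_iInter fun j =>
        isClosed_iInter fun _ => ?_)).measurableSet
      exact isClosed_le (((hcontc i).sub continuous_const).add continuous_const)
        ((hcontc j).sub continuous_const)
    have hSupper : ∀ t : ℝ, 0 < t → volume (S t) ≤ ENNReal.ofReal (ν i) := by
      intro t ht
      set φ := Function.update ψ i (ψ i - t) with hφdef
      have hpt : ∀ p ∈ Ω, Set.indicator (S t) (fun _ => t) p ≤ m φ p - m ψ p := by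
        intro p hp
        by_cases hpS : p ∈ S t
        · rw [Set.indicator_of_mem hpS]
          have hle2 : m ψ p + t ≤ m φ p := by
            refine Finset.le_inf' hne _ fun k _ => ?_
            rcases eq_or_ne k i with rfl | h
            · simp only [hφdef, Function.update_self]
              linarith [hmle ψ p k]
            · simp only [hφdef, Function.update_of_ne h]
              linarith [hpS.2 k h, hmle ψ p i]
          linarith
        · rw [Set.indicator_of_notMem hpS]
          have hle2 : m ψ p ≤ m φ p := by
            refine Finset.le_inf' hne _ fun k _ => ?_
            rcases eq_or_ne k i with rfl | h
            · simp only [hφdef, Function.update_self]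
              linarith [hmle ψ p k]
            · simp only [hφdef, Function.update_of_ne h]
              exact hmle ψ p k
          linarith
      have hindint : IntegrableOn (Set.indicator (S t) fun _ => t) Ω := by
        refine Integrable.indicator ?_ (hSmeas t)
        exact (integrableOn_const_iff enorm_ne_top).mpr (Or.inr (by rw [hΩvol]; exact ENNReal.one_lt_top))
      have hineq : (∫ p in Ω, Set.indicator (S t) (fun _ => t) p)
          ≤ ∫ p in Ω, (m φ p - m ψ p) :=
        setIntegral_mono_on hindint ((hint φ).sub (hint ψ)) hΩmeas hpt
      have hlhs : (∫ p in Ω, (m φ p - m ψ p)) = (∫ p in Ω, m φ p) - ∫ p in Ω, m ψ p :=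
        integral_sub (hint φ) (hint ψ)
      have hrhs : (∫ p in Ω, Set.indicator (S t) (fun _ => t) p)
          = (volume (S t)).toReal * t := by
        rw [setIntegral_indicator (hSmeas t), setIntegral_const, smul_eq_mul]
        rw [Set.inter_eq_self_of_subset_right (hSsub t), measureReal_def]
      have hk := hKey (ψ i - t)
      rw [← hφdef] at hk
      have hco : ψ i - t - ψ i = -t := by ring
      rw [hco] at hk
      have hfin : (volume (S t)).toReal ≤ ν i := by
        refine le_of_mul_le_mul_right ?_ ht
        linarith
      refine (ENNReal.le_ofReal_iff_toReal_le ?_ (hν i).le).mpr hfin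
      exact ne_top_of_le_ne_top (hΩvol ▸ ENNReal.one_ne_top) (measure_mono (hSsub t))
    have hMono : Monotone fun n : ℕ => S (1 / (n + 1)) := by
      intro a b hab p hp
      refine ⟨hp.1, fun j hj => ?_⟩
      have hmono : (1 : ℝ) / (b + 1) ≤ 1 / (a + 1) := by
        apply one_div_le_one_div_of_le
        · positivity
        · exact_mod_cast Nat.add_le_add_right hab 1
      linarith [hp.2 j hj]
    have htendU := tendsto_measure_iUnion_atTop (μ := volume) (s := fun n : ℕ => S (1 / (n + 1))) hMono
    have hUvol : volume (⋃ n : ℕ, S (1 / (n + 1))) ≤ ENNReal.ofReal (ν i) :=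
      le_of_tendsto' htendU fun n => hSupper _ (by positivity)
    have hcover : lagCell Ω x ψ i ⊆ (⋃ n : ℕ, S (1 / (n + 1))) ∪
        ⋃ (j : Fin N) (_ : j ≠ i), {p | ‖p - x i‖ ^ 2 - ψ i = ‖p - x j‖ ^ 2 - ψ j} := by
      intro p hp
      by_cases heq : ∃ j, j ≠ i ∧ ‖p - x i‖ ^ 2 - ψ i = ‖p - x j‖ ^ 2 - ψ j
      · obtain ⟨j, hji, hjeq⟩ := heq
        exact Or.inr (Set.mem_iUnion.mpr ⟨j, Set.mem_iUnion.mpr ⟨hji, hjeq⟩⟩)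
      · push_neg at heq
        have hstrict : ∀ j, j ≠ i → ‖p - x i‖ ^ 2 - ψ i < ‖p - x j‖ ^ 2 - ψ j :=
          fun j hj => lt_of_le_of_ne (hp.2 j) (heq j hj)
        left
        by_cases hNe : (Finset.univ.erase i).Nonempty
        · set δ := (Finset.univ.erase i).inf' hNe
            (fun j => (‖p - x j‖ ^ 2 - ψ j) - (‖p - x i‖ ^ 2 - ψ i)) with hδdef
          have hδpos : 0 < δ := by
            rw [hδdef, Finset.lt_inf'_iff]
            intro j hjmem
            have hj := Finset.mem_erase.mp hjmem
            linarith [hstrict j hj.1]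
          obtain ⟨n, hn⟩ := exists_nat_one_div_lt hδpos
          refine Set.mem_iUnion.mpr ⟨n, hp.1, fun j hj => ?_⟩
          have hgap : δ ≤ (‖p - x j‖ ^ 2 - ψ j) - (‖p - x i‖ ^ 2 - ψ i) := by
            rw [hδdef]
            exact Finset.inf'_le _ (Finset.mem_erase.mpr ⟨hj, Finset.mem_univ j⟩)
          linarith
        · refine Set.mem_iUnion.mpr ⟨0, hp.1, fun j hj => ?_⟩
          exact absurd ⟨j, Finset.mem_erase.mpr ⟨hj, Finset.mem_univ j⟩⟩ hNe
    have hnull : volume (⋃ (j : Fin N) (_ : j ≠ i),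
        {p : EuclideanSpace ℝ (Fin d) | ‖p - x i‖ ^ 2 - ψ i = ‖p - x j‖ ^ 2 - ψ j}) = 0 := by
      refine measure_iUnion_null fun j => measure_iUnion_null fun hj => ?_
      exact OTAux.bisector_null (x i) (x j) (fun h => hj (hx h).symm) (ψ i) (ψ j)
    have hupper : volume (lagCell Ω x ψ i) ≤ ENNReal.ofReal (ν i) := by
      calc volume (lagCell Ω x ψ i)
          ≤ volume ((⋃ n : ℕ, S (1 / (n + 1))) ∪ ⋃ (j : Fin N) (_ : j ≠ i),
            {p : EuclideanSpace ℝ (Fin d) | ‖p - x i‖ ^ 2 - ψ i = ‖p - x j‖ ^ 2 - ψ j}) :=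
            measure_mono hcover
        _ ≤ volume (⋃ n : ℕ, S (1 / (n + 1))) + volume (⋃ (j : Fin N) (_ : j ≠ i),
            {p : EuclideanSpace ℝ (Fin d) | ‖p - x i‖ ^ 2 - ψ i = ‖p - x j‖ ^ 2 - ψ j}) :=
            measure_union_le _ _
        _ = volume (⋃ n : ℕ, S (1 / (n + 1))) := by rw [hnull, add_zero]
        _ ≤ ENNReal.ofReal (ν i) := hUvol
    exact le_antisymm hupper hlow
  · intro hvol φ
    set T : Fin N → Set (EuclideanSpace ℝ (Fin d)) :=
      fun i => lagCell Ω x ψ i \ ⋃ (j : Fin N) (_ : j < i), lagCell Ω x ψ j with hTdef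
    have hTsub : ∀ i, T i ⊆ lagCell Ω x ψ i := fun i => Set.diff_subset
    have hTmeas : ∀ i, MeasurableSet (T i) := fun i =>
      (hcellmeas i).diff (MeasurableSet.iUnion fun j => MeasurableSet.iUnion fun _ => hcellmeas j)
    have hTdisj : Pairwise (Function.onFun Disjoint T) := by
      intro a b hab
      wlog h : a < b generalizing a b
      · exact (this hab.symm (hab.lt_or_gt.resolve_left h)).symm
      · refine Set.disjoint_left.mpr fun p hpa hpb => ?_
        exact hpb.2 (Set.mem_iUnion.mpr ⟨a, Set.mem_iUnion.mpr ⟨h, hpa.1⟩⟩)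
    have hTunion : (⋃ i, T i) = Ω := by
      apply Set.Subset.antisymm
      · exact Set.iUnion_subset fun i p hp => (hTsub i hp).1
      · intro p hp
        have hsne : (Finset.univ.filter fun i => p ∈ lagCell Ω x ψ i).Nonempty := by
          obtain ⟨i₀, hi₀⟩ := hmex ψ p
          refine ⟨i₀, Finset.mem_filter.mpr ⟨Finset.mem_univ _, ⟨hp, fun j => ?_⟩⟩⟩
          rw [← hi₀]; exact hmle ψ p j
        set i := (Finset.univ.filter fun i => p ∈ lagCell Ω x ψ i).min' hsne with hidef
        have hicell : p ∈ lagCell Ω x ψ i := by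
          have := (Finset.univ.filter fun i => p ∈ lagCell Ω x ψ i).min'_mem hsne
          exact (Finset.mem_filter.mp this).2
        refine Set.mem_iUnion.mpr ⟨i, hicell, fun hcontra => ?_⟩
        obtain ⟨j, hj⟩ := Set.mem_iUnion.mp hcontra
        obtain ⟨hji, hpj⟩ := Set.mem_iUnion.mp hj
        have : i ≤ j := by
          rw [hidef]
          exact Finset.min'_le _ j (Finset.mem_filter.mpr ⟨Finset.mem_univ j, hpj⟩)
        exact absurd this (not_le.mpr hji)
    have hTvol_le : ∀ i, volume (T i) ≤ ENNReal.ofReal (ν i) := fun i => by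
      rw [← hvol i]; exact measure_mono (hTsub i)
    have hTvol_ne_top : ∀ i, volume (T i) ≠ ⊤ :=
      fun i => ne_top_of_le_ne_top ENNReal.ofReal_ne_top (hTvol_le i)
    have hTsum : ∑ i, volume (T i) = 1 := by
      rw [← tsum_fintype (L := SummationFilter.unconditional _), ← measure_iUnion hTdisj hTmeas, hTunion, hΩvol]
    have hTtoReal : ∀ i, (volume (T i)).toReal = ν i := by
      have hle : ∀ i ∈ Finset.univ, (volume (T i)).toReal ≤ ν i := fun i _ =>
        ENNReal.toReal_le_of_le_ofReal (hν i).le (hTvol_le i)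
      have hsum2 : ∑ i, (volume (T i)).toReal = ∑ i, ν i := by
        rw [← ENNReal.toReal_sum (fun i _ => hTvol_ne_top i), hTsum, ENNReal.toReal_one]
        exact hsum.symm
      intro i
      exact (Finset.sum_eq_sum_iff_of_le hle).mp hsum2 i (Finset.mem_univ i)
    have hdecomp : ∀ ρ : Fin N → ℝ, (∫ p in Ω, m ρ p) = ∑ i, ∫ p in T i, m ρ p := by
      intro ρ
      rw [← hTunion, integral_iUnion hTmeas hTdisj (hTunion ▸ hint ρ), tsum_fintype]
    have hintT : ∀ (ρ : Fin N → ℝ) i, IntegrableOn (m ρ) (T i) := fun ρ i =>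
      (hint ρ).mono_set (fun p hp => (hTsub i hp).1)
    have hstep : ∀ i, (∫ p in T i, m φ p) ≤ (∫ p in T i, m ψ p) + (ψ i - φ i) * ν i := by
      intro i
      have hconstI : IntegrableOn (fun _ => ψ i - φ i) (T i) volume :=
        (integrableOn_const_iff enorm_ne_top).mpr (Or.inr (lt_top_iff_ne_top.mpr (hTvol_ne_top i)))
      have hmono : (∫ p in T i, m φ p) ≤ ∫ p in T i, (m ψ p + (ψ i - φ i)) := by
        refine setIntegral_mono_on (hintT φ i) ((hintT ψ i).add hconstI) (hTmeas i) ?_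
        intro p hp
        have hpc := hTsub i hp
        calc m φ p ≤ ‖p - x i‖ ^ 2 - φ i := hmle φ p i
          _ = (‖p - x i‖ ^ 2 - ψ i) + (ψ i - φ i) := by ring
          _ = m ψ p + (ψ i - φ i) := by rw [hmcell i p hpc]
      have hconst : (∫ p in T i, (m ψ p + (ψ i - φ i))) =
          (∫ p in T i, m ψ p) + (ψ i - φ i) * ν i := by
        rw [integral_add (hintT ψ i) hconstI, setIntegral_const, smul_eq_mul, measureReal_def, hTtoReal i, mul_comm]
      linarith
    show (∫ p in Ω, m φ p) + ∑ j, φ j * ν j ≤ (∫ p in Ω, m ψ p) + ∑ j, ψ j * ν j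
    have h1 : (∫ p in Ω, m φ p) ≤ (∫ p in Ω, m ψ p) + ∑ i, (ψ i - φ i) * ν i := by
      rw [hdecomp φ, hdecomp ψ, ← Finset.sum_add_distrib]
      exact Finset.sum_le_sum fun i _ => hstep i
    have h2 : ∑ i, (ψ i - φ i) * ν i = ∑ j, ψ j * ν j - ∑ j, φ j * ν j := by
      rw [← Finset.sum_sub_distrib]
      exact Finset.sum_congr rfl fun i _ => by ring
    linarith
end

section
/- Let Ω ⊆ ℝ^d be a nonempty compact set, let x_1, …, x_N ∈ ℝ^d, and let ψ ∈ ℝ^N. Define ψ^c(x) = min_{1 ≤ j ≤ N} (‖x − x_j‖² − ψ_j) for x ∈ Ω, and ψ^{cc}_i = inf_{x ∈ Ω} (‖x − x_i‖² − ψ^c(x)). Then for every i one has ψ^{cc}_i ≥ ψ_i, and ψ^{cc}_i = ψ_i if and only if the Laguerre cell Lag_i^ψ is nonempty. Consequently ψ^{cc} = ψ if and only if Lag_i^ψ ≠ ∅ for all 1 ≤ i ≤ N. -/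
open MeasureTheory

/-- For the semi-discrete double Legendre–Fenchel transform `ψᶜᶜ`, one has `ψᶜᶜᵢ ≥ ψᵢ`,
with equality exactly when the `i`-th Laguerre cell is nonempty; hence `ψᶜᶜ = ψ` iff
all Laguerre cells are nonempty. -/
theorem double_transform_eq_iff_cells_nonempty
    (d N : ℕ) (hN : 0 < N)
    (Ω : Set (EuclideanSpace ℝ (Fin d)))
    (hΩne : Ω.Nonempty) (hΩc : IsCompact Ω)
    (x : Fin N → EuclideanSpace ℝ (Fin d)) (ψ : Fin N → ℝ) :
    let ψc : EuclideanSpace ℝ (Fin d) → ℝ := fun p =>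
      Finset.univ.inf' ⟨⟨0, hN⟩, Finset.mem_univ _⟩ (fun j => ‖p - x j‖ ^ 2 - ψ j)
    let ψcc : Fin N → ℝ := fun i => sInf ((fun p => ‖p - x i‖ ^ 2 - ψc p) '' Ω)
    (∀ i, ψ i ≤ ψcc i) ∧
      (∀ i, ψcc i = ψ i ↔ (lagCell Ω x ψ i).Nonempty) ∧
      (ψcc = ψ ↔ ∀ i, (lagCell Ω x ψ i).Nonempty) := by
  intro ψc ψcc
  -- basic facts about ψc
  have hψc_le : ∀ p i, ψc p ≤ ‖p - x i‖ ^ 2 - ψ i := fun p i =>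
    Finset.inf'_le _ (Finset.mem_univ i)
  -- f i p ≥ ψ i everywhere
  have hlb : ∀ i p, ψ i ≤ ‖p - x i‖ ^ 2 - ψc p := by
    intro i p
    have := hψc_le p i
    linarith
  have hle : ∀ i, ψ i ≤ ψcc i := by
    intro i
    apply le_csInf (hΩne.image _)
    rintro b ⟨p, _, rfl⟩
    exact hlb i p
  have hbdd : ∀ i, BddBelow ((fun p => ‖p - x i‖ ^ 2 - ψc p) '' Ω) := by
    intro i
    refine ⟨ψ i, ?_⟩
    rintro b ⟨p, _, rfl⟩
    exact hlb i p
  -- continuity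
  have hcont : ∀ i : Fin N, Continuous fun p : EuclideanSpace ℝ (Fin d) =>
      ‖p - x i‖ ^ 2 - ψc p := by
    intro i
    have hc : Continuous ψc :=
      Continuous.finset_inf'_apply _ (fun j _ => by fun_prop)
    fun_prop
  have hiff : ∀ i, ψcc i = ψ i ↔ (lagCell Ω x ψ i).Nonempty := by
    intro i
    constructor
    · intro h
      obtain ⟨p₀, hp₀, hmin⟩ := hΩc.exists_isMinOn hΩne (hcont i).continuousOn
      have heq : ‖p₀ - x i‖ ^ 2 - ψc p₀ = ψ i := by
        have h1 : ψcc i ≤ ‖p₀ - x i‖ ^ 2 - ψc p₀ :=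
          csInf_le (hbdd i) ⟨p₀, hp₀, rfl⟩
        have h2 : ψ i ≤ ‖p₀ - x i‖ ^ 2 - ψc p₀ := hlb i p₀
        -- also sInf = value at p₀? Not needed: value ≥ ψ i and ψcc i = ψ i; need value ≤ ψ i
        -- value at p₀ ≤ value at every point, and sInf over image = value at p₀
        have h3 : ‖p₀ - x i‖ ^ 2 - ψc p₀ ≤ ψcc i := by
          apply le_csInf (hΩne.image _)
          rintro b ⟨q, hq, rfl⟩
          exact hmin hq
        linarith [h.le, h.ge]
      refine ⟨p₀, hp₀, fun j => ?_⟩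
      have : ψc p₀ ≤ ‖p₀ - x j‖ ^ 2 - ψ j := hψc_le p₀ j
      have : ψc p₀ = ‖p₀ - x i‖ ^ 2 - ψ i := by linarith
      linarith [hψc_le p₀ j]
    · rintro ⟨p, hpΩ, hp⟩
      have h1 : ‖p - x i‖ ^ 2 - ψ i ≤ ψc p :=
        Finset.le_inf' _ _ fun j _ => hp j
      have h2 : ‖p - x i‖ ^ 2 - ψc p ≤ ψ i := by linarith
      have h3 : ψcc i ≤ ψ i :=
        le_trans (csInf_le (hbdd i) ⟨p, hpΩ, rfl⟩) h2
      exact le_antisymm h3 (hle i)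
  refine ⟨hle, hiff, ?_⟩
  constructor
  · intro h i
    exact (hiff i).mp (congrFun h i)
  · intro h
    funext i
    exact (hiff i).mpr (h i)
end
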